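/- arXiv:1802.08023 — 8 statements merged into one kernel-verified Lean document; each statement's English description precedes it below -/
import Mathlib

section
/- Ex-post efficiency of the Trade Reduction mechanism for double auctions (McAfee): if the efficient trade size satisfies q ≥ 1, then the gains from trade obtained by trading the q−1 most efficient pairs satisfies Σ_{l=1}^{q−1}(b_l − s_l) ≥ (1 − 1/q) · Σ_{l=1}^{q}(b_l − s_l); that is, the Trade Reduction mechanism obtains at least a (1 − 1/q) fraction of the optimal (first-best) gains from trade. -/
/-- **Ex-post efficiency of the Trade Reduction mechanism for double auctions (McAfee).**
There are `n` buyers with values `b 1 ≥ b 2 ≥ ... ≥ b n` (non-increasing) and `m` sellers with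
costs `s 1 ≤ s 2 ≤ ... ≤ s m` (non-decreasing), all positive. The efficient trade size `q` is the
largest `k ≤ min n m` with `b k ≥ s k`. If `q ≥ 1`, then the gains from trade of the `q - 1` most
efficient pairs is at least a `(1 - 1/q)` fraction of the optimal gains from trade
`∑_{l=1}^{q} (b l - s l)`. -/
theorem trade_reduction_double_auction_expost
    (n m q : ℕ) (b s : ℕ → ℝ)
    (hbpos : ∀ i, 1 ≤ i → i ≤ n → 0 < b i)
    (hspos : ∀ j, 1 ≤ j → j ≤ m → 0 < s j)
    (hbmono : ∀ i j, 1 ≤ i → i ≤ j → j ≤ n → b j ≤ b i)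
    (hsmono : ∀ i j, 1 ≤ i → i ≤ j → j ≤ m → s i ≤ s j)
    (hq1 : 1 ≤ q) (hqle : q ≤ min n m)
    (hqtrade : s q ≤ b q)
    (hqmax : ∀ k, q < k → k ≤ min n m → b k < s k) :
    ∑ l ∈ Finset.Icc 1 (q - 1), (b l - s l) ≥
      (1 - 1 / (q : ℝ)) * ∑ l ∈ Finset.Icc 1 q, (b l - s l) := by
  have hqn : q ≤ n := le_trans hqle (min_le_left n m)
  have hqm : q ≤ m := le_trans hqle (min_le_right n m)
  have hterm : ∀ l ∈ Finset.Icc 1 q, b q - s q ≤ b l - s l := by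
    intro l hl
    rw [Finset.mem_Icc] at hl
    have hb := hbmono l q hl.1 hl.2 hqn
    have hs := hsmono l q hl.1 hl.2 hqm
    linarith
  have hsplit : ∑ l ∈ Finset.Icc 1 q, (b l - s l)
      = ∑ l ∈ Finset.Icc 1 (q - 1), (b l - s l) + (b q - s q) := by
    have : Finset.Icc 1 q = insert q (Finset.Icc 1 (q - 1)) := by
      ext x
      simp only [Finset.mem_Icc, Finset.mem_insert]
      omega
    rw [this, Finset.sum_insert (by simp [Finset.mem_Icc]; omega)]
    ring
  have hcard : (Finset.Icc 1 q).card = q := by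
    rw [Nat.card_Icc]; omega
  have hlb : (q : ℝ) * (b q - s q) ≤ ∑ l ∈ Finset.Icc 1 q, (b l - s l) := by
    have := Finset.card_nsmul_le_sum (Finset.Icc 1 q) (fun l => b l - s l) (b q - s q) hterm
    rw [hcard] at this
    simpa [nsmul_eq_mul] using this
  have hqpos : (0 : ℝ) < q := by exact_mod_cast hq1
  rw [hsplit]
  rw [sub_mul, one_mul, div_mul_eq_mul_div, ge_iff_le, sub_le_iff_le_add]
  have : (∑ l ∈ Finset.Icc 1 (q - 1), (b l - s l) + (b q - s q)) / q
      ≥ (b q - s q) := by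
    rw [ge_iff_le, le_div_iff₀ hqpos]
    rw [hsplit] at hlb
    linarith
  simp only [one_mul]
  linarith
end

section
/- In the double-auction setting, the maximum of Σ_{(i,j)∈M}(b_i − s_j) over all matchings M of the complete bipartite graph between the n buyers and the m sellers equals Σ_{l=1}^{q}(b_l − s_l) (which is 0 when q = 0); in particular, the optimal gains from trade is attained by matching the l-th highest-value buyer to the l-th lowest-cost seller for l = 1, …, q. -/
/-- A matching of the complete bipartite graph between buyers `1, ..., n` and sellers
`1, ..., m`: a finite set of buyer–seller pairs in which each buyer and each seller
appears at most once. -/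
lemma da_key (n k : ℕ) (f : ℕ → ℝ)
    (hmono : ∀ i j, 1 ≤ i → i ≤ j → j ≤ n → f j ≤ f i)
    (I : Finset ℕ) (hI : ∀ i ∈ I, 1 ≤ i ∧ i ≤ n) (hcard : I.card = k) :
    ∑ i ∈ I, f i ≤ ∑ l ∈ Finset.Icc 1 k, f l := by
  set e := I.orderEmbOfFin hcard with he
  have hmem : ∀ l : Fin k, e l ∈ I := fun l => I.orderEmbOfFin_mem hcard l
  have hbound : ∀ l : Fin k, (l : ℕ) + 1 ≤ e l := by
    rintro ⟨v, hv⟩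
    induction v with
    | zero => exact (hI _ (hmem ⟨0, hv⟩)).1
    | succ w ih =>
      have hw : w < k := Nat.lt_of_succ_lt hv
      have h1 := ih hw
      have h2 : e ⟨w, hw⟩ < e ⟨w + 1, hv⟩ :=
        (I.orderEmbOfFin hcard).strictMono (by simp [Fin.lt_def])
      simpa using Nat.lt_of_le_of_lt h1 h2
  have himg : Finset.image (fun l : Fin k => e l) Finset.univ = I := by
    apply Finset.coe_injective
    simp only [Finset.coe_image, Finset.coe_univ, Set.image_univ]
    exact I.range_orderEmbOfFin hcard
  rw [← himg, Finset.sum_image (by intro x _ y _ h; exact (I.orderEmbOfFin hcard).injective h)]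
  have : ∑ l ∈ Finset.Icc 1 k, f l = ∑ l : Fin k, f ((l : ℕ) + 1) := by
    rw [Fin.sum_univ_eq_sum_range (fun l => f (l + 1))]
    rw [show Finset.Icc 1 k = Finset.image (· + 1) (Finset.range k) by
      ext x; simp only [Finset.mem_Icc, Finset.mem_image, Finset.mem_range]
      constructor
      · rintro ⟨h1, h2⟩; exact ⟨x - 1, by omega, by omega⟩
      · rintro ⟨y, hy, rfl⟩; omega]
    rw [Finset.sum_image (by intro x _ y _ h; simpa using h)]
  rw [this]
  apply Finset.sum_le_sum
  intro l _
  exact hmono _ _ (Nat.le_add_left 1 l) (hbound l) (hI _ (hmem l)).2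

def IsDAMatching (n m : ℕ) (M : Finset (ℕ × ℕ)) : Prop :=
  (∀ p ∈ M, 1 ≤ p.1 ∧ p.1 ≤ n ∧ 1 ≤ p.2 ∧ p.2 ≤ m) ∧
  (∀ p ∈ M, ∀ q ∈ M, p.1 = q.1 → p = q) ∧
  (∀ p ∈ M, ∀ q ∈ M, p.2 = q.2 → p = q)

/-- **The first-best gains from trade in a double auction.**
With buyer values `b 1 ≥ ... ≥ b n` (non-increasing) and seller costs `s 1 ≤ ... ≤ s m`
(non-decreasing), all positive, and with efficient trade size `q` (the largest `k ≤ min n m`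
with `b k ≥ s k`, and `q = 0` if none exists), the maximum of `∑_{(i,j) ∈ M} (b i - s j)`
over all matchings `M` of the complete bipartite graph equals `∑_{l=1}^{q} (b l - s l)`. -/
theorem double_auction_first_best
    (n m q : ℕ) (b s : ℕ → ℝ)
    (hbpos : ∀ i, 1 ≤ i → i ≤ n → 0 < b i)
    (hspos : ∀ j, 1 ≤ j → j ≤ m → 0 < s j)
    (hbmono : ∀ i j, 1 ≤ i → i ≤ j → j ≤ n → b j ≤ b i)
    (hsmono : ∀ i j, 1 ≤ i → i ≤ j → j ≤ m → s i ≤ s j)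
    (hqle : q ≤ min n m)
    (hqtrade : 1 ≤ q → s q ≤ b q)
    (hqmax : ∀ k, q < k → k ≤ min n m → b k < s k) :
    IsGreatest
      {x : ℝ | ∃ M : Finset (ℕ × ℕ), IsDAMatching n m M ∧ x = ∑ p ∈ M, (b p.1 - s p.2)}
      (∑ l ∈ Finset.Icc 1 q, (b l - s l)) := by
  constructor
  · -- membership: the diagonal matching achieves it
    refine ⟨(Finset.Icc 1 q).image (fun l => (l, l)), ⟨?_, ?_, ?_⟩, ?_⟩
    · rintro p hp
      simp only [Finset.mem_image, Finset.mem_Icc] at hp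
      obtain ⟨l, ⟨h1, h2⟩, rfl⟩ := hp
      exact ⟨h1, by omega, h1, by omega⟩
    · rintro p hp r hr h
      simp only [Finset.mem_image, Finset.mem_Icc] at hp hr
      obtain ⟨l, _, rfl⟩ := hp; obtain ⟨l', _, rfl⟩ := hr
      simp_all
    · rintro p hp r hr h
      simp only [Finset.mem_image, Finset.mem_Icc] at hp hr
      obtain ⟨l, _, rfl⟩ := hp; obtain ⟨l', _, rfl⟩ := hr
      simp_all
    · rw [Finset.sum_image (by intro x _ y _ h; simpa using h)]
  · -- upper bound
    rintro x ⟨M, ⟨hMb, hM1, hM2⟩, rfl⟩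
    set k := M.card with hk
    have hinj1 : Set.InjOn Prod.fst M := fun p hp r hr h => hM1 p hp r hr h
    have hinj2 : Set.InjOn Prod.snd M := fun p hp r hr h => hM2 p hp r hr h
    set I := M.image Prod.fst with hI
    set J := M.image Prod.snd with hJ
    have hIcard : I.card = k := Finset.card_image_of_injOn hinj1
    have hJcard : J.card = k := Finset.card_image_of_injOn hinj2
    have hIb : ∀ i ∈ I, 1 ≤ i ∧ i ≤ n := by
      intro i hi
      simp only [hI, Finset.mem_image] at hi
      obtain ⟨p, hp, rfl⟩ := hi
      exact ⟨(hMb p hp).1, (hMb p hp).2.1⟩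
    have hJb : ∀ j ∈ J, 1 ≤ j ∧ j ≤ m := by
      intro j hj
      simp only [hJ, Finset.mem_image] at hj
      obtain ⟨p, hp, rfl⟩ := hj
      exact ⟨(hMb p hp).2.2.1, (hMb p hp).2.2.2⟩
    have hkn : k ≤ n := by
      have h1 : I ⊆ Finset.Icc 1 n := fun i hi => Finset.mem_Icc.mpr (hIb i hi)
      have := Finset.card_le_card h1
      simpa [hIcard] using this
    have hkm : k ≤ m := by
      have h1 : J ⊆ Finset.Icc 1 m := fun j hj => Finset.mem_Icc.mpr (hJb j hj)
      have := Finset.card_le_card h1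
      simpa [hJcard] using this
    have hbsum : ∑ p ∈ M, b p.1 ≤ ∑ l ∈ Finset.Icc 1 k, b l := by
      rw [show ∑ p ∈ M, b p.1 = ∑ i ∈ I, b i from
        (Finset.sum_image (fun p hp r hr h => hM1 p hp r hr h)).symm]
      exact da_key n k b hbmono I hIb hIcard
    have hssum : ∑ l ∈ Finset.Icc 1 k, s l ≤ ∑ p ∈ M, s p.2 := by
      rw [show ∑ p ∈ M, s p.2 = ∑ j ∈ J, s j from
        (Finset.sum_image (fun p hp r hr h => hM2 p hp r hr h)).symm]
      have := da_key m k (fun j => -s j)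
        (fun i j h1 h2 h3 => neg_le_neg (hsmono i j h1 h2 h3)) J hJb hJcard
      simp only [Finset.sum_neg_distrib, neg_le_neg_iff] at this
      linarith [this]
    have step1 : ∑ p ∈ M, (b p.1 - s p.2) ≤ ∑ l ∈ Finset.Icc 1 k, (b l - s l) := by
      rw [Finset.sum_sub_distrib, Finset.sum_sub_distrib]
      linarith
    have step2 : ∑ l ∈ Finset.Icc 1 k, (b l - s l) ≤ ∑ l ∈ Finset.Icc 1 q, (b l - s l) := by
      rcases le_or_gt k q with hkq | hqk
      · apply Finset.sum_le_sum_of_subset_of_nonneg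
        · exact Finset.Icc_subset_Icc_right hkq
        · intro l hl hl'
          simp only [Finset.mem_Icc] at hl hl'
          have hlq : 1 ≤ l ∧ l ≤ q := ⟨hl.1, hl.2⟩
          have h1q : 1 ≤ q := le_trans hlq.1 hlq.2
          have hbl : b q ≤ b l := hbmono l q hlq.1 hlq.2 (le_trans hqle (min_le_left n m))
          have hsl : s l ≤ s q := hsmono l q hlq.1 hlq.2 (le_trans hqle (min_le_right n m))
          have := hqtrade h1q
          linarith
      · have hsplit : Finset.Icc 1 k = Finset.Icc 1 q ∪ Finset.Icc (q + 1) k := by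
          ext l
          simp only [Finset.mem_union, Finset.mem_Icc]
          omega
        have hdisj : Disjoint (Finset.Icc 1 q) (Finset.Icc (q + 1) k) := by
          rw [Finset.disjoint_left]
          intro l h1 h2
          simp only [Finset.mem_Icc] at h1 h2
          omega
        rw [hsplit, Finset.sum_union hdisj]
        have : ∑ l ∈ Finset.Icc (q + 1) k, (b l - s l) ≤ 0 := by
          apply Finset.sum_nonpos
          intro l hl
          simp only [Finset.mem_Icc] at hl
          have := hqmax l (by omega) (le_min (le_trans hl.2 hkn) (le_trans hl.2 hkm))
          linarith
        linarith
    linarith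
end

section
/- Ex-post efficiency guarantee of the Trade Reduction mechanism for matching markets: let M be a nonempty maximum-weight matching of the matching market G with weight OPT. Define the Trade Reduction gains from trade as GFT_TR = Σ over buyer classes t with q_t > 0 of (the sum of the q_t − d_t largest values among all class-t buyers) minus Σ over seller classes t with q_t > 0 of (the sum of the q_t − d_t smallest costs among all class-t sellers). Then GFT_TR ≥ α · OPT, where α = min{ 1 − d_t/q_t : t a class with q_t > 0 }. -/
open Finset

/-- A matching of the bipartite graph with buyer vertices `B`, seller vertices `S` and
edge relation `E`: a finite set of edges (buyer–seller pairs) that are pairwise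
vertex-disjoint. -/
def IsMatchingOn {B S : Type*} (E : B → S → Prop) (M : Finset (B × S)) : Prop :=
  (∀ p ∈ M, E p.1 p.2) ∧
  (∀ p ∈ M, ∀ q ∈ M, p.1 = q.1 → p = q) ∧
  (∀ p ∈ M, ∀ q ∈ M, p.2 = q.2 → p = q)

/-- The weight (gains from trade) of a matching: `∑_{(i,j) ∈ M} (b i - s j)`. -/
noncomputable def matchWeight {B S : Type*} (b : B → ℝ) (s : S → ℝ)
    (M : Finset (B × S)) : ℝ :=
  ∑ p ∈ M, (b p.1 - s p.2)

/-- The sum of the `k` largest elements of a finite multiset of reals. -/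
noncomputable def topSum (m : Multiset ℝ) (k : ℕ) : ℝ :=
  (((m.sort (· ≤ ·)).reverse).take k).sum

/-- The sum of the `k` smallest elements of a finite multiset of reals. -/
noncomputable def botSum (m : Multiset ℝ) (k : ℕ) : ℝ :=
  ((m.sort (· ≤ ·)).take k).sum

section AuxTR
lemma take_sum_le : ∀ (l : List ℝ), l.Pairwise (· ≤ ·) → ∀ (u : Multiset ℝ),
    u ≤ (l : Multiset ℝ) → (l.take (Multiset.card u)).sum ≤ u.sum := by
  intro l
  induction l with
  | nil =>
    intro _ u hu
    have : u = 0 := le_bot_iff.mp hu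
    simp [this]
  | cons x t ih =>
    intro hs u hu
    have hx : ∀ y ∈ t, x ≤ y := (List.pairwise_cons.mp hs).1
    have ht : t.Pairwise (· ≤ ·) := (List.pairwise_cons.mp hs).2
    rcases eq_or_ne u 0 with rfl | hne
    · simp
    by_cases hxu : x ∈ u
    · have herase : u.erase x ≤ (t : Multiset ℝ) := by
        have : u.erase x ≤ ((x ::ₘ (t : Multiset ℝ)).erase x) := Multiset.erase_le_erase x (by simpa using hu)
        simpa using this
      have hcard : Multiset.card u = Multiset.card (u.erase x) + 1 := by
        have h1 := Multiset.card_erase_of_mem hxu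
        rw [Nat.pred_eq_sub_one] at h1
        have : 0 < Multiset.card u := Multiset.card_pos.mpr hne
        omega
      rw [hcard]
      simp only [List.take_succ_cons, List.sum_cons]
      have := ih ht (u.erase x) herase
      have hsum : x + (u.erase x).sum = u.sum := Multiset.sum_erase hxu
      linarith
    · have hut : u ≤ (t : Multiset ℝ) := by
        rw [Multiset.le_iff_count]
        intro a
        have h1 := (Multiset.le_iff_count.mp (by simpa using hu : u ≤ x ::ₘ (t : Multiset ℝ))) a
        rcases eq_or_ne a x with rfl | hax
        · simp [Multiset.count_eq_zero_of_notMem hxu]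
        · rw [Multiset.count_cons_of_ne hax] at h1
          exact h1
      have hIH := ih ht u hut
      have hn : 0 < Multiset.card u := Multiset.card_pos.mpr hne
      have hlen : Multiset.card u ≤ t.length := by
        have := Multiset.card_le_card hut
        simpa using this
      obtain ⟨n, hn'⟩ : ∃ n, Multiset.card u = n + 1 := ⟨Multiset.card u - 1, by omega⟩
      rw [hn']
      simp only [List.take_succ_cons, List.sum_cons]
      -- (x :: take n t).sum ≤ (take (n+1) t).sum ≤ u.sum
      have hlt : n < t.length := by omega
      have htake : t.take n ++ [t[n]] = t.take (n+1) := List.take_concat_get' t n hlt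
      have : (t.take (n+1)).sum = (t.take n).sum + t[n] := by
        rw [← htake, List.sum_append, List.sum_cons, List.sum_nil, add_zero]
      have hxg : x ≤ t[n] := hx _ (List.getElem_mem hlt)
      rw [hn'] at hIH
      rw [this] at hIH
      linarith

lemma botSum_le_sum (m u : Multiset ℝ) (h : u ≤ m) : botSum m (Multiset.card u) ≤ u.sum := by
  have hs : (m.sort (· ≤ ·)).Pairwise (· ≤ ·) := Multiset.pairwise_sort _ _
  have hm : ((m.sort (· ≤ ·) : List ℝ) : Multiset ℝ) = m := Multiset.sort_eq _ _
  exact take_sum_le _ hs u (by rwa [hm])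

lemma list_sum_map_neg (l : List ℝ) : (l.map (fun x => -x)).sum = -l.sum := by
  induction l with
  | nil => simp
  | cons a t ih => simp [ih]; ring

lemma sort_map_neg (m : Multiset ℝ) :
    (m.map (fun x => -x)).sort (· ≤ ·) = (m.sort (· ≤ ·)).reverse.map (fun x => -x) := by
  refine (fun hp h1 h2 => List.Perm.eq_of_pairwise' (r := (· ≤ ·)) h1 h2 hp) ?_ ?_ ?_
  · have h1 : ((m.map (fun x => -x)).sort (· ≤ ·) : List ℝ).Perm
        ((m.sort (· ≤ ·)).map (fun x => -x)) := by
      rw [← Multiset.coe_eq_coe]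
      rw [Multiset.sort_eq, ← Multiset.map_coe, Multiset.sort_eq]
    exact h1.trans (((m.sort (· ≤ ·)).reverse_perm.symm).map _)
  · exact Multiset.pairwise_sort _ _
  · have hrev : ((m.sort (· ≤ ·)).reverse).Pairwise (· ≥ ·) := by
      rw [List.pairwise_reverse]
      exact Multiset.pairwise_sort m (· ≤ ·)
    exact List.Pairwise.map _ (fun a b hab => by simpa using hab) hrev

lemma mset_sum_map_neg (u : Multiset ℝ) : (u.map (fun x => -x)).sum = -u.sum := by
  induction u using Multiset.induction with
  | empty => simp
  | cons a t ih => simp [ih]; ring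

lemma topSum_eq_neg_botSum (m : Multiset ℝ) (k : ℕ) :
    topSum m k = -botSum (m.map (fun x => -x)) k := by
  rw [topSum, botSum, sort_map_neg, ← List.map_take, list_sum_map_neg]
  simp

lemma sum_le_topSum (m u : Multiset ℝ) (h : u ≤ m) : u.sum ≤ topSum m (Multiset.card u) := by
  have := botSum_le_sum (m.map (fun x => -x)) (u.map (fun x => -x)) (Multiset.map_le_map h)
  rw [Multiset.card_map] at this
  rw [topSum_eq_neg_botSum]
  rw [mset_sum_map_neg] at this
  linarith

lemma exists_bottom_subset {γ : Type*} [DecidableEq γ] (f : γ → ℝ) :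
    ∀ (d : ℕ) (A : Finset γ), d ≤ A.card →
    ∃ C ⊆ A, C.card = d ∧ (A.card : ℝ) * ∑ a ∈ C, f a ≤ (d : ℝ) * ∑ a ∈ A, f a := by
  intro d
  induction d with
  | zero =>
    intro A _
    exact ⟨∅, empty_subset _, card_empty, by simp⟩
  | succ d ih =>
    intro A hd
    have hne : A.Nonempty := card_pos.mp (by omega)
    obtain ⟨a, haA, hamin⟩ := A.exists_min_image f hne
    obtain ⟨C', hC'sub, hC'card, hC'ineq⟩ := ih (A.erase a) (by rw [card_erase_of_mem haA]; omega)
    have hanotC : a ∉ C' := fun h => (notMem_erase a A) (hC'sub h)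
    refine ⟨insert a C', ?_, ?_, ?_⟩
    · intro x hx
      rcases mem_insert.mp hx with rfl | hx
      · exact haA
      · exact mem_of_mem_erase (hC'sub hx)
    · rw [card_insert_of_notMem hanotC, hC'card]
    · rw [sum_insert hanotC]
      have hAsplit : ∑ x ∈ A, f x = f a + ∑ x ∈ A.erase a, f x := (add_sum_erase A f haA).symm
      have hcardn : A.card = (A.erase a).card + 1 := by rw [card_erase_of_mem haA]; omega
      have hcardd : d ≤ (A.erase a).card := by rw [card_erase_of_mem haA]; omega
      have hkey : ∑ x ∈ C', (f x - f a) ≤ ∑ x ∈ A.erase a, (f x - f a) :=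
        sum_le_sum_of_subset_of_nonneg hC'sub
          (fun x hx _ => sub_nonneg.mpr (hamin x (mem_of_mem_erase hx)))
      rw [sum_sub_distrib, sum_sub_distrib, sum_const, sum_const, hC'card,
        nsmul_eq_mul, nsmul_eq_mul] at hkey
      have hcardnR : (A.card : ℝ) = ((A.erase a).card : ℝ) + 1 := by exact_mod_cast hcardn
      have hcarddR : (d : ℝ) ≤ ((A.erase a).card : ℝ) := by exact_mod_cast hcardd
      rw [hAsplit, hcardnR]
      push_cast
      nlinarith [hkey, hC'ineq, hcarddR]

lemma exists_nodup_chain' {α : Type*} [DecidableEq α] (r : α → α → Prop) :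
    ∀ (n : ℕ) (a : α) (l : List α), l.length ≤ n → List.Chain r a l →
    ∃ l', List.Chain r a l' ∧ (∀ x ∈ l', x ∈ l) ∧ (a :: l').Nodup ∧
      (a :: l').getLast (List.cons_ne_nil _ _) = (a :: l).getLast (List.cons_ne_nil _ _) := by
  intro n
  induction n with
  | zero =>
    intro a l hlen hch
    have : l = [] := List.eq_nil_of_length_eq_zero (by omega)
    subst this
    exact ⟨[], List.Chain.nil, by simp, by simp, rfl⟩
  | succ n ih =>
    intro a l hlen hch
    by_cases ha : a ∈ l
    · obtain ⟨l₁, l₂, rfl⟩ := List.append_of_mem ha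
      have hch2 : List.Chain r a l₂ := (List.isChain_cons_split.mp hch).2
      have hlen2 : l₂.length ≤ n := by
        have : (l₁ ++ a :: l₂).length = l₁.length + (l₂.length + 1) := by simp
        omega
      obtain ⟨l', h1, h2, h3, h4⟩ := ih a l₂ hlen2 hch2
      refine ⟨l', h1, fun x hx => by simp [h2 x hx], h3, ?_⟩
      rw [h4]
      simp only [← List.cons_append]
      exact (List.getLast_append_of_right_ne_nil (a :: l₁) (a :: l₂) (List.cons_ne_nil _ _)).symm
    · match l, hch with
      | [], _ => exact ⟨[], List.Chain.nil, by simp, by simp, rfl⟩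
      | b :: t, hch =>
        have hrab : r a b := (List.chain_cons.mp hch).1
        have hchb : List.Chain r b t := (List.chain_cons.mp hch).2
        have hlent : t.length ≤ n := by simp at hlen; omega
        obtain ⟨l'', h1, h2, h3, h4⟩ := ih b t hlent hchb
        refine ⟨b :: l'', List.chain_cons.mpr ⟨hrab, h1⟩, ?_, ?_, ?_⟩
        · intro x hx
          rcases List.mem_cons.mp hx with rfl | hx
          · simp
          · simp [h2 x hx]
        · rw [List.nodup_cons]
          refine ⟨?_, h3⟩
          intro hmem
          rcases List.mem_cons.mp hmem with rfl | hmem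
          · exact ha (by simp)
          · exact ha (by simp [h2 a hmem])
        · rw [List.getLast_cons (List.cons_ne_nil _ _), h4,
            List.getLast_cons (List.cons_ne_nil _ _)]

lemma chain_ineq {B S : Type*} [DecidableEq B] [DecidableEq S]
    (E : B → S → Prop) (b : B → ℝ) (s : S → ℝ) (M : Finset (B × S))
    (hM : IsMatchingOn E M)
    (hMmax : ∀ N, IsMatchingOn E N → matchWeight b s N ≤ matchWeight b s M)
    {e f : B × S} (he : e ∈ M)
    (hreach : Relation.ReflTransGen (fun x y => y ∈ M ∧ E x.1 y.2) e f) :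
    s e.2 ≤ b f.1 := by
  classical
  obtain ⟨l0, hch0, hlast0⟩ := List.exists_isChain_cons_of_relationReflTransGen hreach
  obtain ⟨l, hch, _, hnodup, hlast⟩ :=
    exists_nodup_chain' _ l0.length e l0 le_rfl hch0
  have hlastf : (e :: l).getLast (List.cons_ne_nil _ _) = f := hlast.trans hlast0
  set L : List (B × S) := e :: l with hL
  set k := l.length with hk
  have hLlen : L.length = k + 1 := by simp [hL, hk]
  let ℓ : ℕ → B × S := fun i => L.getD i e
  have hget : ∀ (i : ℕ) (h : i < L.length), ℓ i = L.get ⟨i, h⟩ := by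
    intro i h
    simp only [ℓ]
    rw [List.getD_eq_getElem L e h]
    rfl
  have hl0 : ℓ 0 = e := by rw [hget 0 (by omega)]; rfl
  have hlk : ℓ k = f := by
    rw [hget k (by omega), ← hlastf, List.getLast_eq_getElem]
    congr 1
  -- chain facts
  have hstep : ∀ i, i < k → (ℓ (i + 1)) ∈ M ∧ E (ℓ i).1 (ℓ (i + 1)).2 := by
    intro i hi
    have hgetl : ∀ (j : ℕ) (hj : j < k), ℓ (j+1) = l.get ⟨j, hj⟩ := by
      intro j hj
      rw [hget (j+1) (by omega)]
      rfl
    have hc := List.isChain_iff_getElem.mp hch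
    have h0 : ∀ h : 0 < l.length, l.get ⟨0, h⟩ ∈ M ∧ E e.1 (l.get ⟨0, h⟩).2 :=
      fun h => hc 0 (by simp; omega)
    have hrest : ∀ j (h : j < l.length - 1),
        l.get ⟨j + 1, by omega⟩ ∈ M ∧ E (l.get ⟨j, by omega⟩).1 (l.get ⟨j + 1, by omega⟩).2 :=
      fun j h => hc (j + 1) (by simp; omega)
    rcases Nat.eq_zero_or_pos i with rfl | hipos
    · have := h0 (by omega)
      rw [hgetl 0 hi, hl0]
      exact this
    · obtain ⟨j, rfl⟩ : ∃ j, i = j + 1 := ⟨i - 1, by omega⟩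
      have := hrest j (by omega)
      rw [hgetl (j+1) hi, hgetl j (by omega)]
      exact this
  have hmem : ∀ i, i ≤ k → ℓ i ∈ M := by
    intro i hi
    rcases Nat.eq_zero_or_pos i with rfl | hipos
    · rw [hl0]; exact he
    · obtain ⟨j, rfl⟩ : ∃ j, i = j + 1 := ⟨i - 1, by omega⟩
      exact (hstep j (by omega)).1
  have hinj : ∀ i, i ≤ k → ∀ j, j ≤ k → ℓ i = ℓ j → i = j := by
    intro i hi j hj hij
    rw [hget i (by omega), hget j (by omega)] at hij
    have := List.nodup_iff_injective_get.mp hnodup hij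
    simpa using congrArg Fin.val this
  -- the rewired matching
  set g : ℕ → B × S := fun i => ((ℓ i).1, (ℓ (i + 1)).2) with hg
  set Img : Finset (B × S) := (Finset.range (k+1)).image ℓ with hImg
  set F : Finset (B × S) := (Finset.range k).image g with hF
  set N : Finset (B × S) := (M \ Img) ∪ F with hN
  have hImgM : Img ⊆ M := by
    intro p hp
    obtain ⟨i, hi, rfl⟩ := Finset.mem_image.mp hp
    exact hmem i (by simp at hi; omega)
  have hFmem : ∀ p ∈ F, ∃ i, i < k ∧ p = g i := by
    intro p hp
    obtain ⟨i, hi, rfl⟩ := Finset.mem_image.mp hp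
    exact ⟨i, by simpa using hi, rfl⟩
  -- key: an F element equal to an M element must be some ℓ i
  have hFM : ∀ i, i < k → ∀ p ∈ M, p.1 = (ℓ i).1 → p = ℓ i := by
    intro i hi p hp h1
    exact hM.2.1 p hp (ℓ i) (hmem i (by omega)) h1
  have hmatch : IsMatchingOn E N := by
    refine ⟨?_, ?_, ?_⟩
    · intro p hp
      rcases Finset.mem_union.mp hp with h | h
      · exact hM.1 p (Finset.mem_sdiff.mp h).1
      · obtain ⟨i, hi, rfl⟩ := hFmem p h
        exact (hstep i hi).2
    · intro p hp q hq h1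
      rcases Finset.mem_union.mp hp with h | h <;> rcases Finset.mem_union.mp hq with h' | h'
      · exact hM.2.1 p (Finset.mem_sdiff.mp h).1 q (Finset.mem_sdiff.mp h').1 h1
      · obtain ⟨i, hi, rfl⟩ := hFmem q h'
        have hpM := (Finset.mem_sdiff.mp h).1
        have : p = ℓ i := hFM i hi p hpM h1
        exfalso
        exact (Finset.mem_sdiff.mp h).2 (this ▸ Finset.mem_image.mpr ⟨i, by simp; omega, rfl⟩)
      · obtain ⟨i, hi, rfl⟩ := hFmem p h
        have hqM := (Finset.mem_sdiff.mp h').1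
        have : q = ℓ i := hFM i hi q hqM h1.symm
        exfalso
        exact (Finset.mem_sdiff.mp h').2 (this ▸ Finset.mem_image.mpr ⟨i, by simp; omega, rfl⟩)
      · obtain ⟨i, hi, rfl⟩ := hFmem p h
        obtain ⟨j, hj, rfl⟩ := hFmem q h'
        have : ℓ i = ℓ j := hM.2.1 _ (hmem i (by omega)) _ (hmem j (by omega)) h1
        rw [hinj i (by omega) j (by omega) this]
    · intro p hp q hq h2
      have hsnd : ∀ i, i < k → ∀ p ∈ M, p.2 = (ℓ (i+1)).2 → p = ℓ (i+1) := by
        intro i hi p hp h2'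
        exact hM.2.2 p hp (ℓ (i+1)) (hmem (i+1) (by omega)) h2'
      rcases Finset.mem_union.mp hp with h | h <;> rcases Finset.mem_union.mp hq with h' | h'
      · exact hM.2.2 p (Finset.mem_sdiff.mp h).1 q (Finset.mem_sdiff.mp h').1 h2
      · obtain ⟨i, hi, rfl⟩ := hFmem q h'
        have hpM := (Finset.mem_sdiff.mp h).1
        have : p = ℓ (i+1) := hsnd i hi p hpM h2
        exfalso
        exact (Finset.mem_sdiff.mp h).2 (this ▸ Finset.mem_image.mpr ⟨i+1, by simp; omega, rfl⟩)
      · obtain ⟨i, hi, rfl⟩ := hFmem p h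
        have hqM := (Finset.mem_sdiff.mp h').1
        have : q = ℓ (i+1) := hsnd i hi q hqM h2.symm
        exfalso
        exact (Finset.mem_sdiff.mp h').2 (this ▸ Finset.mem_image.mpr ⟨i+1, by simp; omega, rfl⟩)
      · obtain ⟨i, hi, rfl⟩ := hFmem p h
        obtain ⟨j, hj, rfl⟩ := hFmem q h'
        have : ℓ (i+1) = ℓ (j+1) := hM.2.2 _ (hmem (i+1) (by omega)) _ (hmem (j+1) (by omega)) h2
        have := hinj (i+1) (by omega) (j+1) (by omega) this
        simp only [hg]
        rw [show i = j by omega]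
  -- weight computation
  have hdisj : Disjoint (M \ Img) F := by
    rw [Finset.disjoint_right]
    intro p hpF hpMI
    obtain ⟨i, hi, rfl⟩ := hFmem p hpF
    have hpM := (Finset.mem_sdiff.mp hpMI).1
    have : g i = ℓ i := hFM i hi (g i) hpM rfl
    exact (Finset.mem_sdiff.mp hpMI).2 (this ▸ Finset.mem_image.mpr ⟨i, by simp; omega, rfl⟩)
  have hsumImg : ∑ p ∈ Img, (b p.1 - s p.2) = ∑ i ∈ Finset.range (k+1), (b (ℓ i).1 - s (ℓ i).2) := by
    rw [hImg, Finset.sum_image (fun i hi j hj hij =>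
      hinj i (by simp at hi; omega) j (by simp at hj; omega) hij)]
  have hginj : ∀ i ∈ Finset.range k, ∀ j ∈ Finset.range k, g i = g j → i = j := by
    intro i hi j hj hij
    have h1 : (ℓ i).1 = (ℓ j).1 := by
      have := congrArg Prod.fst hij
      simpa [hg] using this
    have : ℓ i = ℓ j := hM.2.1 _ (hmem i (by simp at hi; omega)) _ (hmem j (by simp at hj; omega)) h1
    exact hinj i (by simp at hi; omega) j (by simp at hj; omega) this
  have hsumF : ∑ p ∈ F, (b p.1 - s p.2) = ∑ i ∈ Finset.range k, (b (ℓ i).1 - s (ℓ (i+1)).2) := by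
    rw [hF, Finset.sum_image hginj]
  have hweight : matchWeight b s N = matchWeight b s M - (b f.1 - s e.2) := by
    rw [matchWeight, hN, Finset.sum_union hdisj, Finset.sum_sdiff_eq_sub hImgM,
      hsumImg, hsumF]
    have h1 : ∑ i ∈ Finset.range (k+1), (b (ℓ i).1 - s (ℓ i).2)
        = ∑ i ∈ Finset.range (k+1), b (ℓ i).1 - ∑ i ∈ Finset.range (k+1), s (ℓ i).2 := by
      rw [Finset.sum_sub_distrib]
    have h2 : ∑ i ∈ Finset.range k, (b (ℓ i).1 - s (ℓ (i+1)).2)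
        = ∑ i ∈ Finset.range k, b (ℓ i).1 - ∑ i ∈ Finset.range k, s (ℓ (i+1)).2 := by
      rw [Finset.sum_sub_distrib]
    have h3 : ∑ i ∈ Finset.range (k+1), b (ℓ i).1
        = ∑ i ∈ Finset.range k, b (ℓ i).1 + b f.1 := by
      rw [Finset.sum_range_succ, hlk]
    have h4 : ∑ i ∈ Finset.range (k+1), s (ℓ i).2
        = ∑ i ∈ Finset.range k, s (ℓ (i+1)).2 + s e.2 := by
      rw [Finset.sum_range_succ', hl0]
    rw [h1, h2, h3, h4, matchWeight]
    ring
  have := hMmax N hmatch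
  rw [hweight] at this
  linarith

section Pi
variable {B S : Type*} [DecidableEq B] [DecidableEq S]
  (E : B → S → Prop) (s : S → ℝ) (M : Finset (B × S))

open Classical in
noncomputable def piPrice (e : B × S) : ℝ :=
  if h : ((M.filter (fun e' => Relation.ReflTransGen
      (fun x y => y ∈ M ∧ E x.1 y.2) e' e)).image (fun e' => s e'.2)).Nonempty
  then ((M.filter (fun e' => Relation.ReflTransGen
      (fun x y => y ∈ M ∧ E x.1 y.2) e' e)).image (fun e' => s e'.2)).max' h
  else 0

variable {E s M}

open Classical in
lemma piPrice_ge {e e' : B × S} (he' : e' ∈ M)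
    (hr : Relation.ReflTransGen (fun x y => y ∈ M ∧ E x.1 y.2) e' e) :
    s e'.2 ≤ piPrice E s M e := by
  classical
  have hmem : s e'.2 ∈ (M.filter (fun e'' => Relation.ReflTransGen
      (fun x y => y ∈ M ∧ E x.1 y.2) e'' e)).image (fun e'' => s e''.2) :=
    mem_image.mpr ⟨e', mem_filter.mpr ⟨he', hr⟩, rfl⟩
  have hne : ((M.filter (fun e'' => Relation.ReflTransGen
      (fun x y => y ∈ M ∧ E x.1 y.2) e'' e)).image (fun e'' => s e''.2)).Nonempty := ⟨_, hmem⟩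
  rw [piPrice, dif_pos hne]
  exact le_max' _ _ hmem

open Classical in
lemma piPrice_le {e : B × S} (he : e ∈ M) {c : ℝ}
    (hc : ∀ e' ∈ M, Relation.ReflTransGen (fun x y => y ∈ M ∧ E x.1 y.2) e' e → s e'.2 ≤ c) :
    piPrice E s M e ≤ c := by
  classical
  have hne : ((M.filter (fun e'' => Relation.ReflTransGen
      (fun x y => y ∈ M ∧ E x.1 y.2) e'' e)).image (fun e'' => s e''.2)).Nonempty :=
    ⟨s e.2, mem_image.mpr ⟨e, mem_filter.mpr ⟨he, Relation.ReflTransGen.refl⟩, rfl⟩⟩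
  rw [piPrice, dif_pos hne]
  apply max'_le
  intro y hy
  obtain ⟨e', he', rfl⟩ := mem_image.mp hy
  have := mem_filter.mp he'
  exact hc e' this.1 this.2

lemma piPrice_mono {e f : B × S} (he : e ∈ M) (hf : f ∈ M) (hEf : E e.1 f.2) :
    piPrice E s M e ≤ piPrice E s M f := by
  apply piPrice_le he
  intro e' he' hr
  exact piPrice_ge he' (hr.tail ⟨hf, hEf⟩)
end Pi

lemma sum_transport {α β : Type*} [DecidableEq α] [DecidableEq β] (a₀ : α)
    (A : Finset α) (Q : Finset β) (h : A.card = Q.card) (F : α → ℝ) :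
    ∃ φ : β → α, (∀ p ∈ Q, φ p ∈ A) ∧ ∑ a ∈ A, F a = ∑ p ∈ Q, F (φ p) := by
  classical
  set e := Finset.equivOfCardEq h with he
  refine ⟨fun p => if hp : p ∈ Q then (e.symm ⟨p, hp⟩ : α) else a₀, ?_, ?_⟩
  · intro p hp
    dsimp only
    rw [dif_pos hp]
    exact (e.symm ⟨p, hp⟩).2
  · refine Finset.sum_bij' (fun a ha => (e ⟨a, ha⟩ : β))
      (fun p hp => if hp' : p ∈ Q then (e.symm ⟨p, hp'⟩ : α) else a₀)
      (fun a ha => (e ⟨a, ha⟩).2) ?_ ?_ ?_ ?_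
    · intro p hp
      rw [dif_pos hp]
      exact (e.symm ⟨p, hp⟩).2
    · intro a ha
      rw [dif_pos (e ⟨a, ha⟩).2]
      rw [Subtype.coe_eta, Equiv.symm_apply_apply]
    · intro p hp
      have h2 : ∀ (x : {x // x ∈ A}), x = e.symm ⟨p, hp⟩ → (↑(e x) : β) = p := by
        rintro x rfl
        rw [Equiv.apply_symm_apply]
      apply h2
      apply Subtype.ext
      dsimp only
      rw [dif_pos hp]
    · intro a ha
      dsimp only
      rw [dif_pos (e ⟨a, ha⟩).2, Subtype.coe_eta, Equiv.symm_apply_apply]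

end AuxTR

/-- **Ex-post efficiency guarantee of the Trade Reduction mechanism for matching markets.**
`cB` (resp. `cS`) assigns to each buyer (resp. seller) its class: two buyers are of the same
class iff they have identical neighborhoods, and similarly for sellers. Let `M` be a nonempty
maximum-weight matching, and for each class `t` let `q_t` be the number of class-`t` agents
covered by `M` and `d_t` the number of distinct classes that `M` matches to class-`t` agents.
Then the Trade Reduction gains from trade — the sum over buyer classes `t` with `q_t > 0` of the
`q_t - d_t` largest values among all class-`t` buyers, minus the sum over seller classes `t` with
`q_t > 0` of the `q_t - d_t` smallest costs among all class-`t` sellers — is at least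
`α · OPT`, where `OPT` is the weight of `M` and `α = min { 1 - d_t/q_t : q_t > 0 }`. -/
theorem trade_reduction_matching_markets_alpha
    {B S ι κ : Type*} [Fintype B] [Fintype S] [Fintype ι] [Fintype κ]
    [DecidableEq B] [DecidableEq S] [DecidableEq ι] [DecidableEq κ]
    (E : B → S → Prop) (b : B → ℝ) (s : S → ℝ)
    (hbpos : ∀ i, 0 < b i) (hspos : ∀ j, 0 < s j)
    (cB : B → ι) (cS : S → κ)
    (hcB : ∀ i i', cB i = cB i' ↔ ∀ j, E i j ↔ E i' j)
    (hcS : ∀ j j', cS j = cS j' ↔ ∀ i, E i j ↔ E i j')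
    (M : Finset (B × S))
    (hM : IsMatchingOn E M) (hMne : M.Nonempty)
    (hMmax : ∀ N, IsMatchingOn E N → matchWeight b s N ≤ matchWeight b s M)
    (qB : ι → ℕ) (hqB : ∀ t, qB t = (M.filter fun p => cB p.1 = t).card)
    (qS : κ → ℕ) (hqS : ∀ t, qS t = (M.filter fun p => cS p.2 = t).card)
    (dB : ι → ℕ)
    (hdB : ∀ t, dB t = ((M.filter fun p => cB p.1 = t).image fun p => cS p.2).card)
    (dS : κ → ℕ)
    (hdS : ∀ t, dS t = ((M.filter fun p => cS p.2 = t).image fun p => cB p.1).card) :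
    (∑ t ∈ univ.filter fun t => 0 < qB t,
        topSum ((univ.filter fun i => cB i = t).val.map b) (qB t - dB t)) -
      (∑ t ∈ univ.filter fun t => 0 < qS t,
        botSum ((univ.filter fun j => cS j = t).val.map s) (qS t - dS t)) ≥
    (sInf {x : ℝ | (∃ t : ι, 0 < qB t ∧ x = 1 - (dB t : ℝ) / (qB t : ℝ)) ∨
        (∃ t : κ, 0 < qS t ∧ x = 1 - (dS t : ℝ) / (qS t : ℝ))}) * matchWeight b s M := by
  classical
  -- potentials
  have hchain : ∀ e f : B × S, e ∈ M →
      Relation.ReflTransGen (fun x y => y ∈ M ∧ E x.1 y.2) e f → s e.2 ≤ b f.1 :=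
    fun e f he hr => chain_ineq E b s M hM hMmax he hr
  set π : B × S → ℝ := piPrice E s M with hπdef
  set yB : B × S → ℝ := fun e => b e.1 - π e with hyB
  set yS : B × S → ℝ := fun e => π e - s e.2 with hyS
  have hyB0 : ∀ e ∈ M, 0 ≤ yB e := by
    intro e he
    have : π e ≤ b e.1 := piPrice_le he (fun e' he' hr => hchain e' e he' hr)
    simp only [hyB]
    linarith
  have hyS0 : ∀ e ∈ M, 0 ≤ yS e := by
    intro e he
    have : s e.2 ≤ π e := piPrice_ge he Relation.ReflTransGen.refl
    simp only [hyS]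
    linarith
  have hπmono : ∀ e ∈ M, ∀ f ∈ M, E e.1 f.2 → π e ≤ π f :=
    fun e he f hf hE => piPrice_mono he hf hE
  -- class fibers
  set MB : ι → Finset (B × S) := fun t => M.filter (fun e => cB e.1 = t) with hMB
  set MS : κ → Finset (B × S) := fun t => M.filter (fun e => cS e.2 = t) with hMS
  set TB : Finset ι := univ.filter (fun t => 0 < qB t) with hTB
  set TS : Finset κ := univ.filter (fun t => 0 < qS t) with hTS
  set P : Finset (ι × κ) := M.image (fun e => (cB e.1, cS e.2)) with hP
  set PB : ι → Finset (ι × κ) := fun t => P.filter (fun p => p.1 = t) with hPB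
  set PS : κ → Finset (ι × κ) := fun t => P.filter (fun p => p.2 = t) with hPS
  have hMBcard : ∀ t, (MB t).card = qB t := fun t => (hqB t).symm
  have hMScard : ∀ t, (MS t).card = qS t := fun t => (hqS t).symm
  have hdBle : ∀ t, dB t ≤ qB t := by
    intro t
    rw [hdB t, hqB t]
    exact card_image_le
  have hdSle : ∀ t, dS t ≤ qS t := by
    intro t
    rw [hdS t, hqS t]
    exact card_image_le
  have hPBim : ∀ t, PB t = (MB t).image (fun e => (t, cS e.2)) := by
    intro t
    ext p
    simp only [hPB, hP, hMB, mem_filter, mem_image]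
    constructor
    · rintro ⟨⟨e, heM, rfl⟩, h1⟩
      exact ⟨e, ⟨heM, h1⟩, by rw [← h1]⟩
    · rintro ⟨e, ⟨heM, het⟩, rfl⟩
      exact ⟨⟨e, heM, by rw [het]⟩, rfl⟩
  have hPSim : ∀ t, PS t = (MS t).image (fun e => (cB e.1, t)) := by
    intro t
    ext p
    simp only [hPS, hP, hMS, mem_filter, mem_image]
    constructor
    · rintro ⟨⟨e, heM, rfl⟩, h1⟩
      exact ⟨e, ⟨heM, h1⟩, by rw [← h1]⟩
    · rintro ⟨e, ⟨heM, het⟩, rfl⟩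
      exact ⟨⟨e, heM, by rw [het]⟩, rfl⟩
  have hPBcard : ∀ t, (PB t).card = dB t := by
    intro t
    rw [hPBim t, hdB t]
    have h2 : (MB t).image (fun e => (t, cS e.2)) =
        ((MB t).image (fun e => cS e.2)).image (fun x => (t, x)) := by
      rw [Finset.image_image]
      rfl
    rw [h2, Finset.card_image_of_injective _
      (fun a c h => ((Prod.mk.injEq _ _ _ _).mp h).2)]
  have hPScard : ∀ t, (PS t).card = dS t := by
    intro t
    rw [hPSim t, hdS t]
    have h2 : (MS t).image (fun e => (cB e.1, t)) =
        ((MS t).image (fun e => cB e.1)).image (fun x => (x, t)) := by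
      rw [Finset.image_image]
      rfl
    rw [h2, Finset.card_image_of_injective _
      (fun a c h => ((Prod.mk.injEq _ _ _ _).mp h).1)]
  -- membership
  have hTBmem : ∀ e ∈ M, cB e.1 ∈ TB := by
    intro e he
    simp only [hTB, mem_filter, mem_univ, true_and, hqB]
    exact card_pos.mpr ⟨e, mem_filter.mpr ⟨he, rfl⟩⟩
  have hTSmem : ∀ e ∈ M, cS e.2 ∈ TS := by
    intro e he
    simp only [hTS, mem_filter, mem_univ, true_and, hqS]
    exact card_pos.mpr ⟨e, mem_filter.mpr ⟨he, rfl⟩⟩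
  have hPTB : ∀ p ∈ P, p.1 ∈ TB := by
    intro p hp
    obtain ⟨e, he, rfl⟩ := mem_image.mp hp
    exact hTBmem e he
  have hPTS : ∀ p ∈ P, p.2 ∈ TS := by
    intro p hp
    obtain ⟨e, he, rfl⟩ := mem_image.mp hp
    exact hTSmem e he
  -- fiberwise sums
  have hfibB : ∀ F : (B × S) → ℝ, ∑ t ∈ TB, ∑ e ∈ MB t, F e = ∑ e ∈ M, F e :=
    fun F => Finset.sum_fiberwise_of_maps_to hTBmem F
  have hfibS : ∀ F : (B × S) → ℝ, ∑ t ∈ TS, ∑ e ∈ MS t, F e = ∑ e ∈ M, F e :=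
    fun F => Finset.sum_fiberwise_of_maps_to hTSmem F
  have hfibPB : ∀ F : (ι × κ) → ℝ, ∑ t ∈ TB, ∑ p ∈ PB t, F p = ∑ p ∈ P, F p :=
    fun F => Finset.sum_fiberwise_of_maps_to hPTB F
  have hfibPS : ∀ F : (ι × κ) → ℝ, ∑ t ∈ TS, ∑ p ∈ PS t, F p = ∑ p ∈ P, F p :=
    fun F => Finset.sum_fiberwise_of_maps_to hPTS F
  -- bottom subsets
  have hselB : ∀ t, ∃ C, C ⊆ MB t ∧ C.card = dB t ∧
      (qB t : ℝ) * ∑ e ∈ C, yB e ≤ (dB t : ℝ) * ∑ e ∈ MB t, yB e := by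
    intro t
    obtain ⟨C, h1, h2, h3⟩ := exists_bottom_subset yB (dB t) (MB t)
      (by rw [hMBcard]; exact hdBle t)
    refine ⟨C, h1, h2, ?_⟩
    rw [← hMBcard t]
    exact h3
  have hselS : ∀ t, ∃ C, C ⊆ MS t ∧ C.card = dS t ∧
      (qS t : ℝ) * ∑ e ∈ C, yS e ≤ (dS t : ℝ) * ∑ e ∈ MS t, yS e := by
    intro t
    obtain ⟨C, h1, h2, h3⟩ := exists_bottom_subset yS (dS t) (MS t)
      (by rw [hMScard]; exact hdSle t)
    refine ⟨C, h1, h2, ?_⟩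
    rw [← hMScard t]
    exact h3
  choose ChB hChBsub hChBcard hChBineq using hselB
  choose ChS hChSsub hChScard hChSineq using hselS
  -- lambda
  set Rset : Finset ℝ := TB.image (fun t => (dB t : ℝ) / qB t) ∪
      TS.image (fun t => (dS t : ℝ) / qS t) with hRset
  have hRne : Rset.Nonempty := by
    obtain ⟨e, he⟩ := hMne
    exact ⟨(dB (cB e.1) : ℝ) / qB (cB e.1),
      mem_union_left _ (mem_image.mpr ⟨cB e.1, hTBmem e he, rfl⟩)⟩
  set lam : ℝ := Rset.max' hRne with hlam
  have hlamB : ∀ t ∈ TB, (dB t : ℝ) / qB t ≤ lam := by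
    intro t ht
    rw [hlam]
    exact le_max' _ _ (by rw [hRset]; exact mem_union_left _ (mem_image.mpr ⟨t, ht, rfl⟩))
  have hlamS : ∀ t ∈ TS, (dS t : ℝ) / qS t ≤ lam := by
    intro t ht
    rw [hlam]
    exact le_max' _ _ (by rw [hRset]; exact mem_union_right _ (mem_image.mpr ⟨t, ht, rfl⟩))
  -- chosen sums small
  have hChBlam : ∀ t ∈ TB, ∑ e ∈ ChB t, yB e ≤ lam * ∑ e ∈ MB t, yB e := by
    intro t ht
    have hq : (0 : ℝ) < qB t := by
      have h0 : 0 < qB t := (mem_filter.mp ht).2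
      exact_mod_cast h0
    have hA0 : 0 ≤ ∑ e ∈ MB t, yB e :=
      sum_nonneg (fun e he => hyB0 e (mem_filter.mp he).1)
    have h1 := hChBineq t
    have h2 : ∑ e ∈ ChB t, yB e ≤ ((dB t : ℝ) / qB t) * ∑ e ∈ MB t, yB e := by
      rw [div_mul_eq_mul_div, le_div_iff₀ hq]
      linarith
    calc ∑ e ∈ ChB t, yB e ≤ ((dB t : ℝ) / qB t) * ∑ e ∈ MB t, yB e := h2
      _ ≤ lam * ∑ e ∈ MB t, yB e := mul_le_mul_of_nonneg_right (hlamB t ht) hA0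
  have hChSlam : ∀ t ∈ TS, ∑ e ∈ ChS t, yS e ≤ lam * ∑ e ∈ MS t, yS e := by
    intro t ht
    have hq : (0 : ℝ) < qS t := by
      have h0 : 0 < qS t := (mem_filter.mp ht).2
      exact_mod_cast h0
    have hA0 : 0 ≤ ∑ e ∈ MS t, yS e :=
      sum_nonneg (fun e he => hyS0 e (mem_filter.mp he).1)
    have h1 := hChSineq t
    have h2 : ∑ e ∈ ChS t, yS e ≤ ((dS t : ℝ) / qS t) * ∑ e ∈ MS t, yS e := by
      rw [div_mul_eq_mul_div, le_div_iff₀ hq]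
      linarith
    calc ∑ e ∈ ChS t, yS e ≤ ((dS t : ℝ) / qS t) * ∑ e ∈ MS t, yS e := h2
      _ ≤ lam * ∑ e ∈ MS t, yS e := mul_le_mul_of_nonneg_right (hlamS t ht) hA0
  -- pairing: transport chosen π-sums to sums over P
  obtain ⟨e₀, he₀⟩ := hMne
  have htrB : ∀ t, ∃ φ : ι × κ → B × S, (∀ p ∈ PB t, φ p ∈ ChB t) ∧
      ∑ e ∈ ChB t, π e = ∑ p ∈ PB t, π (φ p) := by
    intro t
    exact sum_transport e₀ (ChB t) (PB t) (by rw [hChBcard, hPBcard]) π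
  have htrS : ∀ t, ∃ φ : ι × κ → B × S, (∀ p ∈ PS t, φ p ∈ ChS t) ∧
      ∑ e ∈ ChS t, π e = ∑ p ∈ PS t, π (φ p) := by
    intro t
    exact sum_transport e₀ (ChS t) (PS t) (by rw [hChScard, hPScard]) π
  choose φB hφBmem hφBsum using htrB
  choose φS hφSmem hφSsum using htrS
  have hpicomp : ∑ t ∈ TB, ∑ e ∈ ChB t, π e ≤ ∑ t ∈ TS, ∑ e ∈ ChS t, π e := by
    have hBeq : ∑ t ∈ TB, ∑ e ∈ ChB t, π e = ∑ p ∈ P, π (φB p.1 p) := by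
      rw [← hfibPB (fun p => π (φB p.1 p))]
      apply sum_congr rfl
      intro t ht
      rw [hφBsum t]
      apply sum_congr rfl
      intro p hp
      rw [(mem_filter.mp hp).2]
    have hSeq : ∑ t ∈ TS, ∑ e ∈ ChS t, π e = ∑ p ∈ P, π (φS p.2 p) := by
      rw [← hfibPS (fun p => π (φS p.2 p))]
      apply sum_congr rfl
      intro t ht
      rw [hφSsum t]
      apply sum_congr rfl
      intro p hp
      rw [(mem_filter.mp hp).2]
    rw [hBeq, hSeq]
    apply sum_le_sum
    intro p hp
    have hpB : p ∈ PB p.1 := mem_filter.mpr ⟨hp, rfl⟩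
    have hpS : p ∈ PS p.2 := mem_filter.mpr ⟨hp, rfl⟩
    have heC := hφBmem p.1 p hpB
    have hfC := hφSmem p.2 p hpS
    have heMB : φB p.1 p ∈ MB p.1 := hChBsub p.1 heC
    have hfMS : φS p.2 p ∈ MS p.2 := hChSsub p.2 hfC
    have heM : φB p.1 p ∈ M := (mem_filter.mp heMB).1
    have hfM : φS p.2 p ∈ M := (mem_filter.mp hfMS).1
    have hecB : cB (φB p.1 p).1 = p.1 := (mem_filter.mp heMB).2
    have hfcS : cS (φS p.2 p).2 = p.2 := (mem_filter.mp hfMS).2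
    obtain ⟨g, hg, hgkey⟩ := mem_image.mp hp
    have hg1 : cB g.1 = p.1 := by
      have h := congrArg Prod.fst hgkey
      simpa using h
    have hg2 : cS g.2 = p.2 := by
      have h := congrArg Prod.snd hgkey
      simpa using h
    have hEeg : E (φB p.1 p).1 g.2 :=
      (((hcB (φB p.1 p).1 g.1).mp (hecB.trans hg1.symm)) g.2).mpr (hM.1 g hg)
    have hEef : E (φB p.1 p).1 (φS p.2 p).2 :=
      (((hcS g.2 (φS p.2 p).2).mp (hg2.trans hfcS.symm)) (φB p.1 p).1).mp hEeg
    exact hπmono _ heM _ hfM hEef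
  -- GFT-side bounds
  have hTopB : ∀ t ∈ TB, ∑ e ∈ MB t, b e.1 - ∑ e ∈ ChB t, b e.1 ≤
      topSum ((univ.filter fun i => cB i = t).val.map b) (qB t - dB t) := by
    intro t ht
    have hinj1 : ∀ x ∈ MB t \ ChB t, ∀ y ∈ MB t \ ChB t, x.1 = y.1 → x = y := by
      intro x hx y hy hxy
      exact hM.2.1 x (mem_filter.mp (mem_sdiff.mp hx).1).1 y
        (mem_filter.mp (mem_sdiff.mp hy).1).1 hxy
    set U : Finset B := (MB t \ ChB t).image Prod.fst with hU
    have hUcard : U.card = qB t - dB t := by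
      rw [hU, card_image_of_injOn hinj1, card_sdiff_of_subset (hChBsub t), hMBcard, hChBcard]
    have hUsum : ∑ x ∈ U, b x = ∑ e ∈ MB t \ ChB t, b e.1 := by
      rw [hU]
      exact sum_image hinj1
    have hsubm : U.val.map b ≤ ((univ.filter fun i => cB i = t).val.map b) := by
      apply Multiset.map_le_map
      rw [Finset.val_le_iff]
      intro x hx
      obtain ⟨e, he, rfl⟩ := mem_image.mp hx
      exact mem_filter.mpr ⟨mem_univ _, (mem_filter.mp (mem_sdiff.mp he).1).2⟩
    have htop := sum_le_topSum _ _ hsubm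
    rw [Multiset.card_map] at htop
    have hcv : Multiset.card U.val = U.card := rfl
    rw [hcv, hUcard] at htop
    have hmsum : (U.val.map b).sum = ∑ x ∈ U, b x := rfl
    rw [hmsum, hUsum] at htop
    have hsd : ∑ e ∈ MB t \ ChB t, b e.1 =
        ∑ e ∈ MB t, b e.1 - ∑ e ∈ ChB t, b e.1 := sum_sdiff_eq_sub (hChBsub t)
    linarith
  have hBotS : ∀ t ∈ TS,
      botSum ((univ.filter fun j => cS j = t).val.map s) (qS t - dS t) ≤
      ∑ e ∈ MS t, s e.2 - ∑ e ∈ ChS t, s e.2 := by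
    intro t ht
    have hinj1 : ∀ x ∈ MS t \ ChS t, ∀ y ∈ MS t \ ChS t, x.2 = y.2 → x = y := by
      intro x hx y hy hxy
      exact hM.2.2 x (mem_filter.mp (mem_sdiff.mp hx).1).1 y
        (mem_filter.mp (mem_sdiff.mp hy).1).1 hxy
    set U : Finset S := (MS t \ ChS t).image Prod.snd with hU
    have hUcard : U.card = qS t - dS t := by
      rw [hU, card_image_of_injOn hinj1, card_sdiff_of_subset (hChSsub t), hMScard, hChScard]
    have hUsum : ∑ x ∈ U, s x = ∑ e ∈ MS t \ ChS t, s e.2 := by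
      rw [hU]
      exact sum_image hinj1
    have hsubm : U.val.map s ≤ ((univ.filter fun j => cS j = t).val.map s) := by
      apply Multiset.map_le_map
      rw [Finset.val_le_iff]
      intro x hx
      obtain ⟨e, he, rfl⟩ := mem_image.mp hx
      exact mem_filter.mpr ⟨mem_univ _, (mem_filter.mp (mem_sdiff.mp he).1).2⟩
    have hbot := botSum_le_sum _ _ hsubm
    rw [Multiset.card_map] at hbot
    have hcv : Multiset.card U.val = U.card := rfl
    rw [hcv, hUcard] at hbot
    have hmsum : (U.val.map s).sum = ∑ x ∈ U, s x := rfl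
    rw [hmsum, hUsum] at hbot
    have hsd : ∑ e ∈ MS t \ ChS t, s e.2 =
        ∑ e ∈ MS t, s e.2 - ∑ e ∈ ChS t, s e.2 := sum_sdiff_eq_sub (hChSsub t)
    linarith
  -- OPT facts
  have hW0 : 0 ≤ matchWeight b s M := by
    have h := hMmax ∅ ⟨fun p hp => absurd hp (notMem_empty p),
      fun p hp => absurd hp (notMem_empty p), fun p hp => absurd hp (notMem_empty p)⟩
    rw [matchWeight, sum_empty] at h
    exact h
  have hWsplit : matchWeight b s M = ∑ e ∈ M, yB e + ∑ e ∈ M, yS e := by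
    rw [matchWeight, ← sum_add_distrib]
    apply sum_congr rfl
    intro e he
    simp only [hyB, hyS]
    ring
  -- the D bound
  have hDbound : (∑ t ∈ TB, ∑ e ∈ ChB t, b e.1) - (∑ t ∈ TS, ∑ e ∈ ChS t, s e.2)
      ≤ lam * matchWeight b s M := by
    have e1 : ∑ t ∈ TB, ∑ e ∈ ChB t, b e.1 =
        (∑ t ∈ TB, ∑ e ∈ ChB t, yB e) + ∑ t ∈ TB, ∑ e ∈ ChB t, π e := by
      rw [← sum_add_distrib]
      apply sum_congr rfl
      intro t ht
      rw [← sum_add_distrib]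
      apply sum_congr rfl
      intro e he
      simp only [hyB]
      ring
    have e2 : ∑ t ∈ TS, ∑ e ∈ ChS t, s e.2 =
        (∑ t ∈ TS, ∑ e ∈ ChS t, π e) - ∑ t ∈ TS, ∑ e ∈ ChS t, yS e := by
      rw [← sum_sub_distrib]
      apply sum_congr rfl
      intro t ht
      rw [← sum_sub_distrib]
      apply sum_congr rfl
      intro e he
      simp only [hyS]
      ring
    have e3 : ∑ t ∈ TB, ∑ e ∈ ChB t, yB e ≤ lam * ∑ e ∈ M, yB e := by
      calc ∑ t ∈ TB, ∑ e ∈ ChB t, yB e ≤ ∑ t ∈ TB, lam * ∑ e ∈ MB t, yB e :=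
            sum_le_sum hChBlam
        _ = lam * ∑ t ∈ TB, ∑ e ∈ MB t, yB e := by rw [mul_sum]
        _ = lam * ∑ e ∈ M, yB e := by rw [hfibB]
    have e4 : ∑ t ∈ TS, ∑ e ∈ ChS t, yS e ≤ lam * ∑ e ∈ M, yS e := by
      calc ∑ t ∈ TS, ∑ e ∈ ChS t, yS e ≤ ∑ t ∈ TS, lam * ∑ e ∈ MS t, yS e :=
            sum_le_sum hChSlam
        _ = lam * ∑ t ∈ TS, ∑ e ∈ MS t, yS e := by rw [mul_sum]
        _ = lam * ∑ e ∈ M, yS e := by rw [hfibS]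
    rw [e1, e2, hWsplit]
    have := hpicomp
    linarith
  -- assemble the GFT inequality
  have hGFT : matchWeight b s M - lam * matchWeight b s M ≤
      (∑ t ∈ univ.filter fun t => 0 < qB t,
        topSum ((univ.filter fun i => cB i = t).val.map b) (qB t - dB t)) -
      (∑ t ∈ univ.filter fun t => 0 < qS t,
        botSum ((univ.filter fun j => cS j = t).val.map s) (qS t - dS t)) := by
    have hB1 : ∑ t ∈ TB, (∑ e ∈ MB t, b e.1 - ∑ e ∈ ChB t, b e.1) ≤
        ∑ t ∈ TB, topSum ((univ.filter fun i => cB i = t).val.map b) (qB t - dB t) :=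
      sum_le_sum hTopB
    have hS1 : ∑ t ∈ TS, botSum ((univ.filter fun j => cS j = t).val.map s) (qS t - dS t) ≤
        ∑ t ∈ TS, (∑ e ∈ MS t, s e.2 - ∑ e ∈ ChS t, s e.2) :=
      sum_le_sum hBotS
    have hB2 : ∑ t ∈ TB, (∑ e ∈ MB t, b e.1 - ∑ e ∈ ChB t, b e.1) =
        ∑ e ∈ M, b e.1 - ∑ t ∈ TB, ∑ e ∈ ChB t, b e.1 := by
      rw [sum_sub_distrib, hfibB]
    have hS2 : ∑ t ∈ TS, (∑ e ∈ MS t, s e.2 - ∑ e ∈ ChS t, s e.2) =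
        ∑ e ∈ M, s e.2 - ∑ t ∈ TS, ∑ e ∈ ChS t, s e.2 := by
      rw [sum_sub_distrib, hfibS]
    have hWeq : matchWeight b s M = ∑ e ∈ M, b e.1 - ∑ e ∈ M, s e.2 := by
      rw [matchWeight, sum_sub_distrib]
    rw [hB2] at hB1
    rw [hS2] at hS1
    have hTBeq : TB = univ.filter (fun t => 0 < qB t) := hTB
    have hTSeq : TS = univ.filter (fun t => 0 < qS t) := hTS
    rw [← hTBeq, ← hTSeq]
    linarith
  -- sInf bound
  set A : Set ℝ := {x : ℝ | (∃ t : ι, 0 < qB t ∧ x = 1 - (dB t : ℝ) / (qB t : ℝ)) ∨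
      (∃ t : κ, 0 < qS t ∧ x = 1 - (dS t : ℝ) / (qS t : ℝ))} with hA
  have hAbdd : BddBelow A := by
    refine ⟨0, ?_⟩
    rintro x (⟨t, ht, rfl⟩ | ⟨t, ht, rfl⟩)
    · have hq : (0 : ℝ) < qB t := by exact_mod_cast ht
      have : (dB t : ℝ) / qB t ≤ 1 := by
        rw [div_le_one hq]
        exact_mod_cast hdBle t
      linarith
    · have hq : (0 : ℝ) < qS t := by exact_mod_cast ht
      have : (dS t : ℝ) / qS t ≤ 1 := by
        rw [div_le_one hq]
        exact_mod_cast hdSle t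
      linarith
  have hAmem : (1 - lam) ∈ A := by
    have hmem : lam ∈ Rset := max'_mem _ _
    rcases mem_union.mp hmem with h | h
    · obtain ⟨t, ht, heq⟩ := mem_image.mp h
      exact Or.inl ⟨t, (mem_filter.mp ht).2, by rw [heq]⟩
    · obtain ⟨t, ht, heq⟩ := mem_image.mp h
      exact Or.inr ⟨t, (mem_filter.mp ht).2, by rw [heq]⟩
  have hsInf : sInf A ≤ 1 - lam := csInf_le hAbdd hAmem
  calc sInf A * matchWeight b s M ≤ (1 - lam) * matchWeight b s M :=
        mul_le_mul_of_nonneg_right hsInf hW0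
    _ ≤ _ := by
        have := hGFT
        ring_nf
        ring_nf at this
        linarith
end

section
/- Feasibility of the Trade Reduction allocation for matching markets: let M be a maximum-weight matching of the matching market G. Then the winner set consisting, for each buyer class t with q_t > 0, of some q_t − d_t highest-value class-t buyers, and, for each seller class t with q_t > 0, of some q_t − d_t lowest-cost class-t sellers, admits a perfect matching in G; moreover, there is a perfect matching of this winner set in G having exactly r_{t,t'} − 1 edges between class-t agents and class-t' agents for every pair of classes t, t' with r_{t,t'} > 0. -/
open Finset

lemma tr_key {α γ : Type*} [DecidableEq γ] [Fintype γ] (s : Finset α) (f : α → γ) :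
    ∑ y : γ, ((s.filter fun a => f a = y).card - 1) = s.card - (s.image f).card := by
  classical
  set c : γ → ℕ := fun y => (s.filter fun a => f a = y).card with hc
  have hsum : s.card = ∑ y : γ, c y :=
    Finset.card_eq_sum_card_fiberwise (fun x _ => Finset.mem_univ _)
  have himg : (s.image f).card = (univ.filter fun y => 0 < c y).card := by
    congr 1
    ext y
    simp only [Finset.mem_image, Finset.mem_filter, Finset.mem_univ, true_and, hc,
      Finset.card_pos, Finset.filter_nonempty_iff]
  set supp := univ.filter fun y => 0 < c y with hsupp
  have h1 : ∑ y ∈ supp, c y = ∑ y : γ, c y :=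
    Finset.sum_filter_of_ne (fun y _ h => Nat.pos_of_ne_zero h)
  have h2 : ∑ y ∈ supp, (c y - 1) = ∑ y : γ, (c y - 1) :=
    Finset.sum_filter_of_ne (fun y _ h => by
      by_contra hy
      simp only [not_lt, Nat.le_zero] at hy
      simp [hy] at h)
  have h3 : ∑ y ∈ supp, c y = ∑ y ∈ supp, (c y - 1) + supp.card := by
    calc ∑ y ∈ supp, c y = ∑ y ∈ supp, ((c y - 1) + 1) :=
          Finset.sum_congr rfl (fun y hy =>
            (Nat.sub_add_cancel (Finset.mem_filter.mp hy).2).symm)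
      _ = ∑ y ∈ supp, (c y - 1) + supp.card := by
          rw [Finset.sum_add_distrib, Finset.sum_const, smul_eq_mul, mul_one]
  rw [hsum, himg, ← h1, ← h2]
  omega

/-- **Feasibility of the Trade Reduction allocation for matching markets.**
Let `M` be a maximum-weight matching of the matching market. For each buyer class `t` let
`WB t` be a set of `q_t - d_t` highest-value class-`t` buyers, and for each seller class `t`
let `WS t` be a set of `q_t - d_t` lowest-cost class-`t` sellers. Then this winner set admits
a perfect matching in the market graph; moreover, there is such a perfect matching having
exactly `r t t' - 1` edges between class-`t` buyers and class-`t'` sellers for every pair of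
classes with `r t t' > 0`, where `r t t'` is the number of edges of `M` joining a class-`t`
buyer and a class-`t'` seller. -/
theorem trade_reduction_matching_markets_feasibility
    {B S ι κ : Type*} [Fintype B] [Fintype S] [Fintype ι] [Fintype κ]
    [DecidableEq B] [DecidableEq S] [DecidableEq ι] [DecidableEq κ]
    (E : B → S → Prop) (b : B → ℝ) (s : S → ℝ)
    (hbpos : ∀ i, 0 < b i) (hspos : ∀ j, 0 < s j)
    (cB : B → ι) (cS : S → κ)
    (hcB : ∀ i i', cB i = cB i' ↔ ∀ j, E i j ↔ E i' j)
    (hcS : ∀ j j', cS j = cS j' ↔ ∀ i, E i j ↔ E i j')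
    (M : Finset (B × S))
    (hM : IsMatchingOn E M)
    (hMmax : ∀ N, IsMatchingOn E N → matchWeight b s N ≤ matchWeight b s M)
    (qB : ι → ℕ) (hqB : ∀ t, qB t = (M.filter fun p => cB p.1 = t).card)
    (qS : κ → ℕ) (hqS : ∀ t, qS t = (M.filter fun p => cS p.2 = t).card)
    (dB : ι → ℕ)
    (hdB : ∀ t, dB t = ((M.filter fun p => cB p.1 = t).image fun p => cS p.2).card)
    (dS : κ → ℕ)
    (hdS : ∀ t, dS t = ((M.filter fun p => cS p.2 = t).image fun p => cB p.1).card)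
    (r : ι → κ → ℕ)
    (hr : ∀ t t', r t t' = (M.filter fun p => cB p.1 = t ∧ cS p.2 = t').card)
    (WB : ι → Finset B) (WS : κ → Finset S)
    (hWBmem : ∀ t, ∀ i ∈ WB t, cB i = t)
    (hWBcard : ∀ t, (WB t).card = qB t - dB t)
    (hWBtop : ∀ t, ∀ i ∈ WB t, ∀ i', cB i' = t → i' ∉ WB t → b i' ≤ b i)
    (hWSmem : ∀ t, ∀ j ∈ WS t, cS j = t)
    (hWScard : ∀ t, (WS t).card = qS t - dS t)
    (hWSbot : ∀ t, ∀ j ∈ WS t, ∀ j', cS j' = t → j' ∉ WS t → s j ≤ s j') :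
    ∃ M' : Finset (B × S), IsMatchingOn E M' ∧
      M'.image Prod.fst = Finset.univ.biUnion WB ∧
      M'.image Prod.snd = Finset.univ.biUnion WS ∧
      ∀ t t', 0 < r t t' →
        (M'.filter fun p => cB p.1 = t ∧ cS p.2 = t').card = r t t' - 1 := by
  classical
  set g : ι → κ → ℕ := fun t t' => r t t' - 1 with hg
  -- edges exist between winner classes whenever g > 0
  have hE : ∀ t t', 0 < g t t' → ∀ i ∈ WB t, ∀ j ∈ WS t', E i j := by
    intro t t' hgpos i hi j hj
    have hrpos : 0 < r t t' := lt_of_lt_of_le hgpos (Nat.sub_le _ _)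
    rw [hr] at hrpos
    obtain ⟨p, hp⟩ := Finset.card_pos.mp hrpos
    rw [Finset.mem_filter] at hp
    obtain ⟨hpM, h1, h2⟩ := hp
    have hEp := hM.1 p hpM
    have hB : cB i = cB p.1 := by rw [hWBmem t i hi, h1]
    have hS : cS j = cS p.2 := by rw [hWSmem t' j hj, h2]
    rw [(hcB i p.1).mp hB, (hcS j p.2).mp hS]
    exact hEp
  -- cardinality identities
  have cardB : ∀ t, (WB t).card = ∑ t', g t t' := by
    intro t
    rw [hWBcard, hqB, hdB, ← tr_key (M.filter fun p => cB p.1 = t) (fun p => cS p.2)]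
    refine Finset.sum_congr rfl (fun t' _ => ?_)
    rw [hg]
    congr 1
    rw [hr, Finset.filter_filter]
  have cardS : ∀ t', (WS t').card = ∑ t, g t t' := by
    intro t'
    rw [hWScard, hqS, hdS, ← tr_key (M.filter fun p => cS p.2 = t') (fun p => cB p.1)]
    refine Finset.sum_congr rfl (fun t _ => ?_)
    rw [hg]
    congr 1
    rw [hr, Finset.filter_filter]
    exact congrArg Finset.card (Finset.filter_congr (fun p _ => by tauto))
  have hcardB : ∀ t, Fintype.card (WB t) = Fintype.card (Σ t' : κ, Fin (g t t')) := by
    intro t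
    simp [Fintype.card_coe, cardB t]
  have hcardS : ∀ t', Fintype.card (WS t') = Fintype.card (Σ t : ι, Fin (g t t')) := by
    intro t'
    simp [Fintype.card_coe, cardS t']
  let eB : ∀ t, ↥(WB t) ≃ Σ t' : κ, Fin (g t t') := fun t => Fintype.equivOfCardEq (hcardB t)
  let eS : ∀ t', ↥(WS t') ≃ Σ t : ι, Fin (g t t') := fun t' => Fintype.equivOfCardEq (hcardS t')
  let F : (Σ t : ι, Σ t' : κ, Fin (g t t')) → B × S :=
    fun x => ((((eB x.1).symm x.2 : WB x.1) : B), (((eS x.2.1).symm ⟨x.1, x.2.2⟩ : WS x.2.1) : S))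
  have hF1 : ∀ x, (F x).1 ∈ WB x.1 := fun x => ((eB x.1).symm x.2).2
  have hF2 : ∀ x, (F x).2 ∈ WS x.2.1 := fun x => ((eS x.2.1).symm ⟨x.1, x.2.2⟩).2
  have hcF1 : ∀ x, cB (F x).1 = x.1 := fun x => hWBmem _ _ (hF1 x)
  have hcF2 : ∀ x, cS (F x).2 = x.2.1 := fun x => hWSmem _ _ (hF2 x)
  have hFinj1 : ∀ x y, (F x).1 = (F y).1 → x = y := by
    intro x y h
    have ht : x.1 = y.1 := by rw [← hcF1 x, ← hcF1 y, h]
    obtain ⟨a, z⟩ := x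
    obtain ⟨a', z'⟩ := y
    simp only at ht
    subst ht
    have hz : (eB a).symm z = (eB a).symm z' := Subtype.coe_injective h
    have : z = z' := (eB a).symm.injective hz
    rw [this]
  have hFinj2 : ∀ x y, (F x).2 = (F y).2 → x = y := by
    intro x y h
    have ht : x.2.1 = y.2.1 := by rw [← hcF2 x, ← hcF2 y, h]
    obtain ⟨a, c, k⟩ := x
    obtain ⟨a', c', k'⟩ := y
    simp only at ht
    subst ht
    have hz : (eS c).symm ⟨a, k⟩ = (eS c).symm ⟨a', k'⟩ := Subtype.coe_injective h
    have h2 : (⟨a, k⟩ : Σ t : ι, Fin (g t c)) = ⟨a', k'⟩ := (eS c).symm.injective hz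
    obtain ⟨h3, h4⟩ := Sigma.mk.inj_iff.mp h2
    subst h3
    rw [eq_of_heq h4]
  have hFinj : Function.Injective F := fun x y h => hFinj1 x y (congrArg Prod.fst h)
  refine ⟨Finset.univ.image F, ⟨?_, ?_, ?_⟩, ?_, ?_, ?_⟩
  · intro p hp
    obtain ⟨x, _, rfl⟩ := Finset.mem_image.mp hp
    exact hE x.1 x.2.1 x.2.2.pos _ (hF1 x) _ (hF2 x)
  · intro p hp q hq h
    obtain ⟨x, _, rfl⟩ := Finset.mem_image.mp hp
    obtain ⟨y, _, rfl⟩ := Finset.mem_image.mp hq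
    rw [hFinj1 x y h]
  · intro p hp q hq h
    obtain ⟨x, _, rfl⟩ := Finset.mem_image.mp hp
    obtain ⟨y, _, rfl⟩ := Finset.mem_image.mp hq
    rw [hFinj2 x y h]
  · ext i
    simp only [Finset.image_image, Finset.mem_image, Finset.mem_biUnion, Finset.mem_univ,
      true_and]
    constructor
    · rintro ⟨x, -, rfl⟩
      exact ⟨x.1, hF1 x⟩
    · rintro ⟨t, hi⟩
      refine ⟨⟨t, eB t ⟨i, hi⟩⟩, ?_⟩
      show (((eB t).symm (eB t ⟨i, hi⟩) : WB t) : B) = i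
      rw [Equiv.symm_apply_apply]
  · ext j
    simp only [Finset.image_image, Finset.mem_image, Finset.mem_biUnion, Finset.mem_univ,
      true_and]
    constructor
    · rintro ⟨x, -, rfl⟩
      exact ⟨x.2.1, hF2 x⟩
    · rintro ⟨t', hj⟩
      refine ⟨⟨(eS t' ⟨j, hj⟩).1, t', (eS t' ⟨j, hj⟩).2⟩, ?_⟩
      show (((eS t').symm ⟨(eS t' ⟨j, hj⟩).1, (eS t' ⟨j, hj⟩).2⟩ : WS t') : S) = j
      rw [Sigma.eta, Equiv.symm_apply_apply]
  · intro t t' hrpos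
    have hstep : (Finset.univ.image F).filter (fun p => cB p.1 = t ∧ cS p.2 = t')
        = (Finset.univ.filter fun x : Σ a : ι, Σ c : κ, Fin (g a c) =>
             x.1 = t ∧ x.2.1 = t').image F := by
      rw [Finset.filter_image]
      congr 1
      refine Finset.filter_congr (fun x _ => ?_)
      simp only [hcF1 x, hcF2 x]
    rw [hstep, Finset.card_image_of_injective _ hFinj]
    have hcnt : (Finset.univ.filter fun x : Σ a : ι, Σ c : κ, Fin (g a c) =>
        x.1 = t ∧ x.2.1 = t').card = g t t' := by
      rw [← Fintype.card_fin (g t t'), ← Finset.card_univ]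
      refine (Finset.card_bij
        (fun (k : Fin (g t t')) _ => (⟨t, ⟨t', k⟩⟩ : Σ a : ι, Σ c : κ, Fin (g a c)))
        ?_ ?_ ?_).symm
      · intro k _
        simp
      · intro k1 _ k2 _ h
        simpa using h
      · rintro ⟨a, c, k⟩ hx
        simp only [Finset.mem_filter, Finset.mem_univ, true_and] at hx
        obtain ⟨rfl, rfl⟩ := hx
        exact ⟨k, Finset.mem_univ _, rfl⟩
    exact hcnt
end

section
/- VCG payments never run a surplus for the mechanism on a traded edge: let G be a matching market, let W* denote the maximum weight over all matchings of G, and for a vertex v let W*_{−v} denote the maximum weight over all matchings of G leaving v uncovered. If (i,j) is an edge of some maximum-weight matching of G, then the VCG payment received by seller j is at least the VCG payment made by buyer i: (W* − W*_{−j} + s_j) ≥ (W*_{−i} − W* + b_i); equivalently, 2·W* ≥ W*_{−i} + W*_{−j} + (b_i − s_j). -/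
section Aux

variable {B S : Type*} {E : B → S → Prop} {b : B → ℝ} {s : S → ℝ}

lemma matching_erase [DecidableEq (B × S)] {X : Finset (B × S)} (h : IsMatchingOn E X)
    (e : B × S) : IsMatchingOn E (X.erase e) := by
  obtain ⟨h1, h2, h3⟩ := h
  refine ⟨fun p hp => h1 p (Finset.mem_of_mem_erase hp), ?_, ?_⟩
  · intro p hp q hq hpq
    exact h2 p (Finset.mem_of_mem_erase hp) q (Finset.mem_of_mem_erase hq) hpq
  · intro p hp q hq hpq
    exact h3 p (Finset.mem_of_mem_erase hp) q (Finset.mem_of_mem_erase hq) hpq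

lemma matching_insert [DecidableEq (B × S)] {X : Finset (B × S)} (h : IsMatchingOn E X)
    {i : B} {j : S} (hE : E i j) (hi : ∀ p ∈ X, p.1 ≠ i) (hj : ∀ p ∈ X, p.2 ≠ j) :
    IsMatchingOn E (insert (i, j) X) := by
  obtain ⟨h1, h2, h3⟩ := h
  refine ⟨?_, ?_, ?_⟩
  · intro p hp
    rcases Finset.mem_insert.1 hp with h | h
    · subst h; exact hE
    · exact h1 p h
  · intro p hp q hq hpq
    rcases Finset.mem_insert.1 hp with h | h <;> rcases Finset.mem_insert.1 hq with h' | h'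
    · rw [h, h']
    · subst h; exact absurd hpq.symm (hi q h')
    · subst h'; exact absurd hpq (hi p h)
    · exact h2 p h q h' hpq
  · intro p hp q hq hpq
    rcases Finset.mem_insert.1 hp with h | h <;> rcases Finset.mem_insert.1 hq with h' | h'
    · rw [h, h']
    · subst h; exact absurd hpq.symm (hj q h')
    · subst h'; exact absurd hpq (hj p h)
    · exact h3 p h q h' hpq

lemma weight_erase [DecidableEq (B × S)] {X : Finset (B × S)} {e : B × S} (he : e ∈ X) :
    matchWeight b s X = (b e.1 - s e.2) + matchWeight b s (X.erase e) := by
  unfold matchWeight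
  rw [← Finset.sum_erase_add _ _ he]; ring

lemma weight_insert [DecidableEq (B × S)] {X : Finset (B × S)} {e : B × S} (he : e ∉ X) :
    matchWeight b s (insert e X) = (b e.1 - s e.2) + matchWeight b s X := by
  unfold matchWeight
  rw [Finset.sum_insert he]

/-- Key exchange lemma: given a matching `X` avoiding buyer `i` and a matching `Y`
avoiding seller `j`, the edges of `X` and `Y` can be redistributed into two matchings
`A`, `C` of the same total weight, with `A` avoiding both `i` and `j`. -/
lemma key_exchange (E : B → S → Prop) (b : B → ℝ) (s : S → ℝ) :
    ∀ n : ℕ, ∀ X Y : Finset (B × S), X.card + Y.card ≤ n →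
    IsMatchingOn E X → IsMatchingOn E Y →
    ∀ i : B, ∀ j : S, (∀ p ∈ X, p.1 ≠ i) → (∀ p ∈ Y, p.2 ≠ j) →
    ∃ A C : Finset (B × S), IsMatchingOn E A ∧ IsMatchingOn E C ∧
      matchWeight b s A + matchWeight b s C = matchWeight b s X + matchWeight b s Y ∧
      (∀ p ∈ A, p ∈ X ∨ p ∈ Y) ∧ (∀ p ∈ C, p ∈ X ∨ p ∈ Y) ∧
      (∀ p ∈ A, p.1 ≠ i) ∧ (∀ p ∈ A, p.2 ≠ j) := by
  classical
  intro n
  induction n with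
  | zero =>
      intro X Y hcard hX hY i j hXi hYj
      have hX0 : X = ∅ := Finset.card_eq_zero.1 (by omega)
      have hY0 : Y = ∅ := Finset.card_eq_zero.1 (by omega)
      subst hX0; subst hY0
      exact ⟨∅, ∅, ⟨by simp, by simp, by simp⟩, ⟨by simp, by simp, by simp⟩,
        by ring, by simp, by simp, by simp, by simp⟩
  | succ n ih =>
      intro X Y hcard hX hY i j hXi hYj
      by_cases hiY : ∃ p ∈ Y, p.1 = i
      · -- i is covered in Y by edge (i, j1)
        obtain ⟨e1, he1Y, he1i⟩ := hiY
        have hj1 : e1 = (i, e1.2) := by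
          cases e1; simp at he1i ⊢; exact he1i
        set j1 := e1.2 with hj1def
        have hij1Y : (i, j1) ∈ Y := by rw [← hj1]; exact he1Y
        have hj1ne : j1 ≠ j := by
          intro h; exact hYj (i, j1) hij1Y h
        by_cases hj1X : ∃ q ∈ X, q.2 = j1
        · -- case a1: j1 is covered in X by (i2, j1)
          obtain ⟨e2, he2X, he2j⟩ := hj1X
          have : e2 = (e2.1, j1) := by cases e2; simp at he2j ⊢; exact he2j
          set i2 := e2.1 with hi2def
          have hi2j1X : (i2, j1) ∈ X := by rw [← this]; exact he2X
          have hi2ne : i2 ≠ i := hXi (i2, j1) hi2j1X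
          set X' := X.erase (i2, j1) with hX'def
          set Y' := Y.erase (i, j1) with hY'def
          have hcard' : X'.card + Y'.card ≤ n := by
            have h1 : X'.card = X.card - 1 := Finset.card_erase_of_mem hi2j1X
            have h2 : Y'.card = Y.card - 1 := Finset.card_erase_of_mem hij1Y
            have h3 : 1 ≤ X.card := Finset.card_pos.2 ⟨_, hi2j1X⟩
            have h4 : 1 ≤ Y.card := Finset.card_pos.2 ⟨_, hij1Y⟩
            omega
          have hX'i2 : ∀ p ∈ X', p.1 ≠ i2 := by
            intro p hp hpi2
            have hpX := Finset.mem_of_mem_erase hp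
            have := hX.2.1 p hpX (i2, j1) hi2j1X hpi2
            exact (Finset.mem_erase.1 hp).1 this
          have hY'j : ∀ p ∈ Y', p.2 ≠ j := fun p hp => hYj p (Finset.mem_of_mem_erase hp)
          obtain ⟨A₁, C₁, hA₁, hC₁, hw₁, hAsub, hCsub, hAi2, hAj⟩ :=
            ih X' Y' hcard' (matching_erase hX _) (matching_erase hY _) i2 j hX'i2 hY'j
          -- no edges at i, at j1 anywhere in X' ∪ Y'
          have hnoi : ∀ p, (p ∈ X' ∨ p ∈ Y') → p.1 ≠ i := by
            intro p hp hpi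
            rcases hp with h | h
            · exact hXi p (Finset.mem_of_mem_erase h) hpi
            · have hpY := Finset.mem_of_mem_erase h
              have := hY.2.1 p hpY (i, j1) hij1Y hpi
              exact (Finset.mem_erase.1 h).1 this
          have hnoj1 : ∀ p, (p ∈ X' ∨ p ∈ Y') → p.2 ≠ j1 := by
            intro p hp hpj
            rcases hp with h | h
            · have hpX := Finset.mem_of_mem_erase h
              have := hX.2.2 p hpX (i2, j1) hi2j1X hpj
              exact (Finset.mem_erase.1 h).1 this
            · have hpY := Finset.mem_of_mem_erase h
              have := hY.2.2 p hpY (i, j1) hij1Y hpj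
              exact (Finset.mem_erase.1 h).1 this
          have hAi2' : ∀ p ∈ A₁, p.1 ≠ i2 := hAi2
          have hAj1 : ∀ p ∈ A₁, p.2 ≠ j1 := fun p hp => hnoj1 p (hAsub p hp)
          have hCi : ∀ p ∈ C₁, p.1 ≠ i := fun p hp => hnoi p (hCsub p hp)
          have hCj1 : ∀ p ∈ C₁, p.2 ≠ j1 := fun p hp => hnoj1 p (hCsub p hp)
          refine ⟨insert (i2, j1) A₁, insert (i, j1) C₁,
            matching_insert hA₁ (hX.1 _ hi2j1X) hAi2' hAj1,
            matching_insert hC₁ (hY.1 _ hij1Y) hCi hCj1, ?_, ?_, ?_, ?_, ?_⟩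
          · have hnA : (i2, j1) ∉ A₁ := fun h => hAj1 _ h rfl
            have hnC : (i, j1) ∉ C₁ := fun h => hCj1 _ h rfl
            rw [weight_insert hnA, weight_insert hnC,
              weight_erase (b := b) (s := s) hi2j1X, weight_erase (b := b) (s := s) hij1Y]
            simp only
            linarith [hw₁]
          · intro p hp
            rcases Finset.mem_insert.1 hp with h | h
            · subst h; exact Or.inl hi2j1X
            · rcases hAsub p h with h' | h'
              · exact Or.inl (Finset.mem_of_mem_erase h')
              · exact Or.inr (Finset.mem_of_mem_erase h')
          · intro p hp
            rcases Finset.mem_insert.1 hp with h | h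
            · subst h; exact Or.inr hij1Y
            · rcases hCsub p h with h' | h'
              · exact Or.inl (Finset.mem_of_mem_erase h')
              · exact Or.inr (Finset.mem_of_mem_erase h')
          · intro p hp
            rcases Finset.mem_insert.1 hp with h | h
            · subst h; exact hi2ne
            · exact hnoi p (hAsub p h)
          · intro p hp
            rcases Finset.mem_insert.1 hp with h | h
            · subst h; exact hj1ne
            · exact hAj p h
        · -- case a2: j1 uncovered in X
          set Y' := Y.erase (i, j1) with hY'def
          have hcard' : X.card + Y'.card ≤ n := by
            have h2 : Y'.card = Y.card - 1 := Finset.card_erase_of_mem hij1Y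
            have h4 : 1 ≤ Y.card := Finset.card_pos.2 ⟨_, hij1Y⟩
            omega
          have hY'j : ∀ p ∈ Y', p.2 ≠ j := fun p hp => hYj p (Finset.mem_of_mem_erase hp)
          obtain ⟨A₁, C₁, hA₁, hC₁, hw₁, hAsub, hCsub, hAi, hAj⟩ :=
            ih X Y' hcard' hX (matching_erase hY _) i j hXi hY'j
          have hnoi : ∀ p, (p ∈ X ∨ p ∈ Y') → p.1 ≠ i := by
            intro p hp hpi
            rcases hp with h | h
            · exact hXi p h hpi
            · have hpY := Finset.mem_of_mem_erase h
              have := hY.2.1 p hpY (i, j1) hij1Y hpi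
              exact (Finset.mem_erase.1 h).1 this
          have hnoj1 : ∀ p, (p ∈ X ∨ p ∈ Y') → p.2 ≠ j1 := by
            intro p hp hpj
            rcases hp with h | h
            · exact hj1X ⟨p, h, hpj⟩
            · have hpY := Finset.mem_of_mem_erase h
              have := hY.2.2 p hpY (i, j1) hij1Y hpj
              exact (Finset.mem_erase.1 h).1 this
          have hCi : ∀ p ∈ C₁, p.1 ≠ i := fun p hp => hnoi p (hCsub p hp)
          have hCj1 : ∀ p ∈ C₁, p.2 ≠ j1 := fun p hp => hnoj1 p (hCsub p hp)
          refine ⟨A₁, insert (i, j1) C₁, hA₁,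
            matching_insert hC₁ (hY.1 _ hij1Y) hCi hCj1, ?_, ?_, ?_, hAi, hAj⟩
          · have hnC : (i, j1) ∉ C₁ := fun h => hCj1 _ h rfl
            rw [weight_insert hnC, weight_erase (b := b) (s := s) hij1Y] at *
            simp only at *
            linarith [hw₁]
          · intro p hp
            rcases hAsub p hp with h' | h'
            · exact Or.inl h'
            · exact Or.inr (Finset.mem_of_mem_erase h')
          · intro p hp
            rcases Finset.mem_insert.1 hp with h | h
            · subst h; exact Or.inr hij1Y
            · rcases hCsub p h with h' | h'
              · exact Or.inl h'
              · exact Or.inr (Finset.mem_of_mem_erase h')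
      · -- i uncovered in Y
        by_cases hjX : ∃ q ∈ X, q.2 = j
        · obtain ⟨e2, he2X, he2j⟩ := hjX
          have : e2 = (e2.1, j) := by cases e2; simp at he2j ⊢; exact he2j
          set i2 := e2.1 with hi2def
          have hi2jX : (i2, j) ∈ X := by rw [← this]; exact he2X
          have hi2ne : i2 ≠ i := hXi (i2, j) hi2jX
          by_cases hi2Y : ∃ p ∈ Y, p.1 = i2
          · -- case b2ii: (i2, j2) ∈ Y
            obtain ⟨e3, he3Y, he3i⟩ := hi2Y
            have : e3 = (i2, e3.2) := by cases e3; simp at he3i ⊢; exact he3i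
            set j2 := e3.2 with hj2def
            have hi2j2Y : (i2, j2) ∈ Y := by rw [← this]; exact he3Y
            have hj2ne : j2 ≠ j := hYj (i2, j2) hi2j2Y
            set X' := X.erase (i2, j) with hX'def
            set Y' := Y.erase (i2, j2) with hY'def
            have hcard' : X'.card + Y'.card ≤ n := by
              have h1 : X'.card = X.card - 1 := Finset.card_erase_of_mem hi2jX
              have h2 : Y'.card = Y.card - 1 := Finset.card_erase_of_mem hi2j2Y
              have h3 : 1 ≤ X.card := Finset.card_pos.2 ⟨_, hi2jX⟩
              have h4 : 1 ≤ Y.card := Finset.card_pos.2 ⟨_, hi2j2Y⟩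
              omega
            have hX'i : ∀ p ∈ X', p.1 ≠ i := fun p hp => hXi p (Finset.mem_of_mem_erase hp)
            have hY'j2 : ∀ p ∈ Y', p.2 ≠ j2 := by
              intro p hp hpj
              have hpY := Finset.mem_of_mem_erase hp
              have := hY.2.2 p hpY (i2, j2) hi2j2Y hpj
              exact (Finset.mem_erase.1 hp).1 this
            obtain ⟨A₁, C₁, hA₁, hC₁, hw₁, hAsub, hCsub, hAi, hAj2⟩ :=
              ih X' Y' hcard' (matching_erase hX _) (matching_erase hY _) i j2 hX'i hY'j2
            have hnoi2 : ∀ p, (p ∈ X' ∨ p ∈ Y') → p.1 ≠ i2 := by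
              intro p hp hpi
              rcases hp with h | h
              · have hpX := Finset.mem_of_mem_erase h
                have := hX.2.1 p hpX (i2, j) hi2jX hpi
                exact (Finset.mem_erase.1 h).1 this
              · have hpY := Finset.mem_of_mem_erase h
                have := hY.2.1 p hpY (i2, j2) hi2j2Y hpi
                exact (Finset.mem_erase.1 h).1 this
            have hnoj : ∀ p, (p ∈ X' ∨ p ∈ Y') → p.2 ≠ j := by
              intro p hp hpj
              rcases hp with h | h
              · have hpX := Finset.mem_of_mem_erase h
                have := hX.2.2 p hpX (i2, j) hi2jX hpj
                exact (Finset.mem_erase.1 h).1 this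
              · exact hYj p (Finset.mem_of_mem_erase h) hpj
            have hAi2 : ∀ p ∈ A₁, p.1 ≠ i2 := fun p hp => hnoi2 p (hAsub p hp)
            have hAj2' : ∀ p ∈ A₁, p.2 ≠ j2 := hAj2
            have hCi2 : ∀ p ∈ C₁, p.1 ≠ i2 := fun p hp => hnoi2 p (hCsub p hp)
            have hCj : ∀ p ∈ C₁, p.2 ≠ j := fun p hp => hnoj p (hCsub p hp)
            refine ⟨insert (i2, j2) A₁, insert (i2, j) C₁,
              matching_insert hA₁ (hY.1 _ hi2j2Y) hAi2 hAj2',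
              matching_insert hC₁ (hX.1 _ hi2jX) hCi2 hCj, ?_, ?_, ?_, ?_, ?_⟩
            · have hnA : (i2, j2) ∉ A₁ := fun h => hAi2 _ h rfl
              have hnC : (i2, j) ∉ C₁ := fun h => hCi2 _ h rfl
              rw [weight_insert hnA, weight_insert hnC,
                weight_erase (b := b) (s := s) hi2jX, weight_erase (b := b) (s := s) hi2j2Y]
              simp only
              linarith [hw₁]
            · intro p hp
              rcases Finset.mem_insert.1 hp with h | h
              · subst h; exact Or.inr hi2j2Y
              · rcases hAsub p h with h' | h'
                · exact Or.inl (Finset.mem_of_mem_erase h')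
                · exact Or.inr (Finset.mem_of_mem_erase h')
            · intro p hp
              rcases Finset.mem_insert.1 hp with h | h
              · subst h; exact Or.inl hi2jX
              · rcases hCsub p h with h' | h'
                · exact Or.inl (Finset.mem_of_mem_erase h')
                · exact Or.inr (Finset.mem_of_mem_erase h')
            · intro p hp
              rcases Finset.mem_insert.1 hp with h | h
              · subst h; exact hi2ne
              · exact hAi p h
            · intro p hp
              rcases Finset.mem_insert.1 hp with h | h
              · subst h; exact hj2ne
              · exact hnoj p (hAsub p h)
          · -- case b2i: i2 uncovered in Y
            set X' := X.erase (i2, j) with hX'def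
            have hcard' : X'.card + Y.card ≤ n := by
              have h1 : X'.card = X.card - 1 := Finset.card_erase_of_mem hi2jX
              have h3 : 1 ≤ X.card := Finset.card_pos.2 ⟨_, hi2jX⟩
              omega
            have hX'i : ∀ p ∈ X', p.1 ≠ i := fun p hp => hXi p (Finset.mem_of_mem_erase hp)
            obtain ⟨A₁, C₁, hA₁, hC₁, hw₁, hAsub, hCsub, hAi, hAj⟩ :=
              ih X' Y hcard' (matching_erase hX _) hY i j hX'i hYj
            have hnoi2 : ∀ p, (p ∈ X' ∨ p ∈ Y) → p.1 ≠ i2 := by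
              intro p hp hpi
              rcases hp with h | h
              · have hpX := Finset.mem_of_mem_erase h
                have := hX.2.1 p hpX (i2, j) hi2jX hpi
                exact (Finset.mem_erase.1 h).1 this
              · exact hi2Y ⟨p, h, hpi⟩
            have hnoj : ∀ p, (p ∈ X' ∨ p ∈ Y) → p.2 ≠ j := by
              intro p hp hpj
              rcases hp with h | h
              · have hpX := Finset.mem_of_mem_erase h
                have := hX.2.2 p hpX (i2, j) hi2jX hpj
                exact (Finset.mem_erase.1 h).1 this
              · exact hYj p h hpj
            have hCi2 : ∀ p ∈ C₁, p.1 ≠ i2 := fun p hp => hnoi2 p (hCsub p hp)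
            have hCj : ∀ p ∈ C₁, p.2 ≠ j := fun p hp => hnoj p (hCsub p hp)
            refine ⟨A₁, insert (i2, j) C₁, hA₁,
              matching_insert hC₁ (hX.1 _ hi2jX) hCi2 hCj, ?_, ?_, ?_, hAi, hAj⟩
            · have hnC : (i2, j) ∉ C₁ := fun h => hCi2 _ h rfl
              rw [weight_insert hnC, weight_erase (b := b) (s := s) hi2jX] at *
              simp only at *
              linarith [hw₁]
            · intro p hp
              rcases hAsub p hp with h' | h'
              · exact Or.inl (Finset.mem_of_mem_erase h')
              · exact Or.inr h'
            · intro p hp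
              rcases Finset.mem_insert.1 hp with h | h
              · subst h; exact Or.inl hi2jX
              · rcases hCsub p h with h' | h'
                · exact Or.inl (Finset.mem_of_mem_erase h')
                · exact Or.inr h'
        · -- case b1: j uncovered in X
          refine ⟨X, Y, hX, hY, rfl, fun p hp => Or.inl hp, fun p hp => Or.inr hp,
            hXi, fun p hp hpj => hjX ⟨p, hp, hpj⟩⟩

end Aux


/-- **VCG payments never run a surplus for the mechanism on a traded edge.**
Let `Wstar` be the maximum weight over all matchings of the market graph, let `Wi`
(resp. `Wj`) be the maximum weight over matchings leaving buyer `i` (resp. seller `j`)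
uncovered. If `(i,j)` is an edge of some maximum-weight matching, then the VCG payment
received by seller `j` is at least the VCG payment made by buyer `i`:
`Wstar - Wj + s j ≥ Wi - Wstar + b i`. -/
theorem vcg_payment_no_deficit
    {B S : Type*} [Fintype B] [Fintype S]
    (E : B → S → Prop) (b : B → ℝ) (s : S → ℝ)
    (hbpos : ∀ i, 0 < b i) (hspos : ∀ j, 0 < s j)
    (i : B) (j : S) (Wstar Wi Wj : ℝ)
    (hW : IsGreatest {x : ℝ | ∃ M, IsMatchingOn E M ∧ x = matchWeight b s M} Wstar)
    (hWi : IsGreatest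
      {x : ℝ | ∃ M, IsMatchingOn E M ∧ (∀ p ∈ M, p.1 ≠ i) ∧ x = matchWeight b s M} Wi)
    (hWj : IsGreatest
      {x : ℝ | ∃ M, IsMatchingOn E M ∧ (∀ p ∈ M, p.2 ≠ j) ∧ x = matchWeight b s M} Wj)
    (hedge : ∃ M, IsMatchingOn E M ∧ matchWeight b s M = Wstar ∧ (i, j) ∈ M) :
    Wstar - Wj + s j ≥ Wi - Wstar + b i := by
  classical
  obtain ⟨Mstar, hMstar, hMw, hij⟩ := hedge
  have hEij : E i j := hMstar.1 _ hij
  obtain ⟨X, hXmatch, hXi, hXw⟩ := hWi.1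
  obtain ⟨Y, hYmatch, hYj, hYw⟩ := hWj.1
  obtain ⟨A, C, hA, hC, hw, _, _, hAi, hAj⟩ :=
    key_exchange E b s (X.card + Y.card) X Y le_rfl hXmatch hYmatch i j hXi hYj
  have hA' : IsMatchingOn E (insert (i, j) A) := matching_insert hA hEij hAi hAj
  have hnA : (i, j) ∉ A := fun h => hAi _ h rfl
  have h1 : matchWeight b s (insert (i, j) A) ≤ Wstar :=
    hW.2 ⟨insert (i, j) A, hA', rfl⟩
  have h2 : matchWeight b s C ≤ Wstar := hW.2 ⟨C, hC, rfl⟩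
  rw [weight_insert hnA] at h1
  have := hw
  rw [← hXw, ← hYw] at this
  linarith
end

section
/- Let G be a matching market, let M be a maximum-weight matching of G with weight W*, and let (i,j) ∈ M. If some maximum-weight matching among those leaving buyer i uncovered also leaves seller j uncovered, then W*_{−i} = W* − (b_i − s_j), where W*_{−i} is the maximum weight over matchings leaving i uncovered; consequently, buyer i's VCG payment W*_{−i} − W* + b_i equals s_j. Symmetrically, if some maximum-weight matching among those leaving seller j uncovered also leaves buyer i uncovered, then W*_{−j} = W* − (b_i − s_j) and seller j's VCG payment W* − W*_{−j} + s_j equals b_i. -/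
/-- **VCG prices when the partner is also left uncovered.** Let `M` be a maximum-weight
matching with weight `W* = matchWeight b s M` and `(i,j) ∈ M`, and let `Wi` (resp. `Wj`)
be the maximum weight over matchings leaving buyer `i` (resp. seller `j`) uncovered.
If some maximum-weight matching among those leaving `i` uncovered also leaves `j` uncovered,
then `Wi = W* - (b i - s j)` and buyer `i`'s VCG payment `Wi - W* + b i` equals `s j`;
symmetrically for seller `j`. -/
theorem vcg_price_when_partner_uncovered
    {B S : Type*} [Fintype B] [Fintype S]
    (E : B → S → Prop) (b : B → ℝ) (s : S → ℝ)
    (hbpos : ∀ i, 0 < b i) (hspos : ∀ j, 0 < s j)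
    (M : Finset (B × S)) (hM : IsMatchingOn E M)
    (hMmax : ∀ N, IsMatchingOn E N → matchWeight b s N ≤ matchWeight b s M)
    (i : B) (j : S) (hij : (i, j) ∈ M) (Wi Wj : ℝ)
    (hWi : IsGreatest
      {x : ℝ | ∃ N, IsMatchingOn E N ∧ (∀ p ∈ N, p.1 ≠ i) ∧ x = matchWeight b s N} Wi)
    (hWj : IsGreatest
      {x : ℝ | ∃ N, IsMatchingOn E N ∧ (∀ p ∈ N, p.2 ≠ j) ∧ x = matchWeight b s N} Wj) :
    ((∃ N, IsMatchingOn E N ∧ (∀ p ∈ N, p.1 ≠ i) ∧ matchWeight b s N = Wi ∧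
        (∀ p ∈ N, p.2 ≠ j)) →
      Wi = matchWeight b s M - (b i - s j) ∧ Wi - matchWeight b s M + b i = s j) ∧
    ((∃ N, IsMatchingOn E N ∧ (∀ p ∈ N, p.2 ≠ j) ∧ matchWeight b s N = Wj ∧
        (∀ p ∈ N, p.1 ≠ i)) →
      Wj = matchWeight b s M - (b i - s j) ∧ matchWeight b s M - Wj + s j = b i) := by
  
  classical
  have hEij : E i j := hM.1 _ hij
  -- weight of M minus the edge (i,j)
  have herase_w : matchWeight b s (M.erase (i, j)) = matchWeight b s M - (b i - s j) := by
    unfold matchWeight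
    rw [← Finset.sum_erase_add M _ hij]
    ring
  have herase_m : IsMatchingOn E (M.erase (i, j)) :=
    ⟨fun p hp => hM.1 p (Finset.mem_of_mem_erase hp),
     fun p hp q hq h => hM.2.1 p (Finset.mem_of_mem_erase hp) q (Finset.mem_of_mem_erase hq) h,
     fun p hp q hq h => hM.2.2 p (Finset.mem_of_mem_erase hp) q (Finset.mem_of_mem_erase hq) h⟩
  have herase_i : ∀ p ∈ M.erase (i, j), p.1 ≠ i := by
    intro p hp hpi
    have := hM.2.1 p (Finset.mem_of_mem_erase hp) (i, j) hij hpi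
    exact (Finset.ne_of_mem_erase hp) this
  have herase_j : ∀ p ∈ M.erase (i, j), p.2 ≠ j := by
    intro p hp hpj
    have := hM.2.2 p (Finset.mem_of_mem_erase hp) (i, j) hij hpj
    exact (Finset.ne_of_mem_erase hp) this
  -- inserting (i,j) into a matching avoiding both i and j
  have hins : ∀ N : Finset (B × S), IsMatchingOn E N → (∀ p ∈ N, p.1 ≠ i) →
      (∀ p ∈ N, p.2 ≠ j) →
      IsMatchingOn E (insert (i, j) N) ∧
      matchWeight b s (insert (i, j) N) = matchWeight b s N + (b i - s j) := by
    intro N hN hNi hNj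
    have hnot : (i, j) ∉ N := fun h => hNi _ h rfl
    constructor
    · refine ⟨?_, ?_, ?_⟩
      · intro p hp
        rcases Finset.mem_insert.mp hp with h | h
        · subst h; exact hEij
        · exact hN.1 p h
      · intro p hp q hq h
        rcases Finset.mem_insert.mp hp with hp' | hp' <;>
          rcases Finset.mem_insert.mp hq with hq' | hq'
        · rw [hp', hq']
        · exact absurd (h ▸ hNi q hq') (by subst hp'; simp)
        · exact absurd (hNi p hp') (by subst hq'; simp [h])
        · exact hN.2.1 p hp' q hq' h
      · intro p hp q hq h
        rcases Finset.mem_insert.mp hp with hp' | hp' <;>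
          rcases Finset.mem_insert.mp hq with hq' | hq'
        · rw [hp', hq']
        · exact absurd (h ▸ hNj q hq') (by subst hp'; simp)
        · exact absurd (hNj p hp') (by subst hq'; simp [h])
        · exact hN.2.2 p hp' q hq' h
    · unfold matchWeight
      rw [Finset.sum_insert hnot]; ring
  have hkey : ∀ N : Finset (B × S), IsMatchingOn E N → (∀ p ∈ N, p.1 ≠ i) →
      (∀ p ∈ N, p.2 ≠ j) → matchWeight b s N ≤ matchWeight b s M - (b i - s j) := by
    intro N hN hNi hNj
    obtain ⟨hm, hw⟩ := hins N hN hNi hNj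
    have := hMmax _ hm
    linarith [hw]
  constructor
  · rintro ⟨N, hN, hNi, hNw, hNj⟩
    have h1 : Wi ≤ matchWeight b s M - (b i - s j) := hNw ▸ hkey N hN hNi hNj
    have h2 : matchWeight b s M - (b i - s j) ≤ Wi := by
      rw [← herase_w]
      exact hWi.2 ⟨M.erase (i, j), herase_m, herase_i, rfl⟩
    constructor <;> linarith
  · rintro ⟨N, hN, hNj, hNw, hNi⟩
    have h1 : Wj ≤ matchWeight b s M - (b i - s j) := hNw ▸ hkey N hN hNi hNj
    have h2 : matchWeight b s M - (b i - s j) ≤ Wj := by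
      rw [← herase_w]
      exact hWj.2 ⟨M.erase (i, j), herase_m, herase_j, rfl⟩
    constructor <;> linarith
end

section
/- Triviality of alternating cycles under uniqueness: let W be a node weight function on a finite graph, and suppose M is the UNIQUE matching of maximum node-based weight (as an edge set, among all matchings of the graph). Then for every matching M' of the graph, the symmetric difference M Δ M' contains no cycle; equivalently, every cycle in the edge set M ∪ M' uses only edges of M ∩ M'. -/
open Finset

/-- A matching of the graph with edge set `G` (a finite set of non-loop edges): a subset of
the edges that is pairwise vertex-disjoint. -/
def IsGraphMatching {V : Type*} (G : Finset (Sym2 V)) (M : Finset (Sym2 V)) : Prop :=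
  M ⊆ G ∧ ∀ e ∈ M, ∀ f ∈ M, e ≠ f → ∀ v : V, v ∈ e → v ∉ f

/-- The node-based weight of a matching: the sum of the node weights `W v` over all vertices
`v` covered by the matching. -/
noncomputable def nodeWeight {V : Type*} [Fintype V] [DecidableEq V] (W : V → ℝ)
    (M : Finset (Sym2 V)) : ℝ :=
  ∑ v ∈ univ.filter fun v => ∃ e ∈ M, v ∈ e, W v

/-- **Triviality of alternating cycles under uniqueness.** Let `W` be a node weight function
on a finite graph and suppose `M` is the unique matching of maximum node-based weight. Then for
every matching `M'` of the graph, every cycle (a cyclic sequence of `k ≥ 3` distinct vertices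
with consecutive edges) in the edge set `M ∪ M'` uses only edges of `M ∩ M'`; equivalently,
the symmetric difference `M Δ M'` contains no cycle. -/
theorem alternating_cycles_trivial
    {V : Type*} [Fintype V] [DecidableEq V]
    (G : Finset (Sym2 V)) (hG : ∀ e ∈ G, ¬ e.IsDiag)
    (W : V → ℝ) (M : Finset (Sym2 V))
    (hM : IsGraphMatching G M)
    (hMmax : ∀ N, IsGraphMatching G N → nodeWeight W N ≤ nodeWeight W M)
    (hMuniq : ∀ N, IsGraphMatching G N → nodeWeight W N = nodeWeight W M → N = M) :
    ∀ M', IsGraphMatching G M' →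
      ∀ k : ℕ, 3 ≤ k → ∀ c : ℕ → V,
        (∀ l l', l < k → l' < k → c l = c l' → l = l') →
        (∀ l < k, s(c l, c ((l + 1) % k)) ∈ M ∪ M') →
        ∀ l < k, s(c l, c ((l + 1) % k)) ∈ M ∩ M' := by
  classical
  intro M' hM' k hk c hinj hcyc
  exfalso
  let e : ℕ → Sym2 V := fun j => s(c j, c ((j + 1) % k))
  have hcyc' : ∀ l < k, e l ∈ M ∪ M' := hcyc
  have hk0 : 0 < k := by omega
  have hsucclt : ∀ j, (j + 1) % k < k := fun j => Nat.mod_lt _ hk0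
  have hsuccne : ∀ j < k, (j + 1) % k ≠ j := by
    intro j hj h
    rcases lt_or_ge (j + 1) k with h' | h'
    · rw [Nat.mod_eq_of_lt h'] at h; omega
    · have hjk : j + 1 = k := by omega
      rw [hjk, Nat.mod_self] at h; omega
  have hvmem1 : ∀ j, c j ∈ e j := fun j => Sym2.mem_mk_left _ _
  have hvmem2 : ∀ j, c ((j + 1) % k) ∈ e j := fun j => Sym2.mem_mk_right _ _
  have hmem_iff : ∀ (v : V) (j : ℕ), v ∈ e j ↔ v = c j ∨ v = c ((j + 1) % k) :=
    fun v j => Sym2.mem_iff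
  -- distinct indices give distinct edges
  have hedist : ∀ j < k, ∀ j' < k, j ≠ j' → e j ≠ e j' := by
    intro j hj j' hj' hne h
    have h' : (c j = c j' ∧ c ((j + 1) % k) = c ((j' + 1) % k)) ∨
        (c j = c ((j' + 1) % k) ∧ c ((j + 1) % k) = c j') := Sym2.eq_iff.mp h
    rcases h' with ⟨h1, _⟩ | ⟨h1, h2⟩
    · exact hne (hinj _ _ hj hj' h1)
    · have e1 : j = (j' + 1) % k := hinj _ _ hj (hsucclt j') h1
      have e2 : (j + 1) % k = j' := hinj _ _ (hsucclt j) hj' h2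
      have key : j = (j + 1 + 1) % k := by
        conv_lhs => rw [e1]
        rw [← e2, Nat.mod_add_mod]
      rcases lt_or_ge (j + 2) k with h3 | h3
      · rw [show j + 1 + 1 = j + 2 by omega, Nat.mod_eq_of_lt h3] at key; omega
      · have h2k : (j + 1 + 1) % k = j + 2 - k := by
          rw [show j + 1 + 1 = j + 2 by omega, Nat.mod_eq_sub_mod h3,
            Nat.mod_eq_of_lt (by omega)]
        omega
  -- adjacent cycle edges can't both belong to one matching
  have hadj : ∀ N, IsGraphMatching G N → ∀ j < k, e j ∈ N → e ((j + 1) % k) ∈ N → False := by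
    intro N hN j hj h1 h2
    have hne : e j ≠ e ((j + 1) % k) :=
      hedist j hj _ (hsucclt j) (fun h => hsuccne j hj h.symm)
    exact hN.2 _ h1 _ h2 hne _ (hvmem2 j) (hvmem1 _)
  by_cases hcap : ∃ j, j < k ∧ e j ∈ M ∧ e j ∈ M'
  · obtain ⟨j, hj, h1, h2⟩ := hcap
    rcases Finset.mem_union.mp (hcyc' _ (hsucclt j)) with h | h
    · exact hadj M hM j hj h1 h
    · exact hadj M' hM' j hj h2 h
  push_neg at hcap
  have hone : ∀ j < k, (e j ∈ M ∧ e j ∉ M') ∨ (e j ∈ M' ∧ e j ∉ M) := by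
    intro j hj
    rcases Finset.mem_union.mp (hcyc' j hj) with h | h
    · exact Or.inl ⟨h, hcap j hj h⟩
    · exact Or.inr ⟨h, fun h' => hcap j hj h' h⟩
  have halt : ∀ j < k, e j ∈ M → e ((j + 1) % k) ∈ M' := by
    intro j hj h
    rcases hone _ (hsucclt j) with ⟨h1, _⟩ | ⟨h1, _⟩
    · exact (hadj M hM j hj h h1).elim
    · exact h1
  -- every cycle vertex is covered by an M cycle edge and an M' cycle edge
  have hcov : ∀ i < k,
      (∃ p, p < k ∧ e p ∈ M ∧ c i ∈ e p) ∧ (∃ p, p < k ∧ e p ∈ M' ∧ c i ∈ e p) := by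
    intro i hi
    set p := (i + (k - 1)) % k with hp
    have hpk : p < k := Nat.mod_lt _ hk0
    have hpi : (p + 1) % k = i := by
      rw [hp, Nat.mod_add_mod, show i + (k - 1) + 1 = i + k by omega,
        Nat.add_mod_right, Nat.mod_eq_of_lt hi]
    have hci : c i ∈ e p := by rw [← hpi]; exact hvmem2 p
    rcases hone p hpk with ⟨h1, _⟩ | ⟨h1, _⟩
    · have h2 : e ((p + 1) % k) ∈ M' := halt p hpk h1
      rw [hpi] at h2
      exact ⟨⟨p, hpk, h1, hci⟩, ⟨i, hi, h2, hvmem1 i⟩⟩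
    · have h3 : e i ∈ M := by
        rcases hone i hi with ⟨ha, _⟩ | ⟨ha, _⟩
        · exact ha
        · exact (hadj M' hM' p hpk h1 (by rw [hpi]; exact ha)).elim
      exact ⟨⟨i, hi, h3, hvmem1 i⟩, ⟨p, hpk, h1, hci⟩⟩
  -- the cycle edge set and the swapped matching
  set C : Finset (Sym2 V) := (Finset.range k).image e with hC
  have hmemC : ∀ j < k, e j ∈ C := fun j hj =>
    Finset.mem_image_of_mem e (Finset.mem_range.mpr hj)
  have hCmem : ∀ f ∈ C, ∃ j, j < k ∧ f = e j := by
    intro f hf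
    rw [hC, Finset.mem_image] at hf
    obtain ⟨j, hj, h⟩ := hf
    exact ⟨j, Finset.mem_range.mp hj, h.symm⟩
  set N : Finset (Sym2 V) := (M \ C) ∪ (M' ∩ C) with hN
  -- non-cycle M edges avoid cycle vertices
  have hMside : ∀ f ∈ M \ C, ∀ i < k, c i ∉ f := by
    intro f hf i hi hcf
    obtain ⟨⟨p, hpk, hpM, hcp⟩, _⟩ := hcov i hi
    have hne : e p ≠ f := by
      intro h; rw [← h] at hf; exact (Finset.mem_sdiff.mp hf).2 (hmemC p hpk)
    exact hM.2 _ hpM _ (Finset.mem_sdiff.mp hf).1 hne _ hcp hcf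
  have hNmatch : IsGraphMatching G N := by
    constructor
    · intro f hf
      rcases Finset.mem_union.mp hf with h | h
      · exact hM.1 (Finset.mem_sdiff.mp h).1
      · exact hM'.1 (Finset.mem_inter.mp h).1
    · intro f hf g hg hne v hvf hvg
      rcases Finset.mem_union.mp hf with hf' | hf' <;>
        rcases Finset.mem_union.mp hg with hg' | hg'
      · exact hM.2 _ (Finset.mem_sdiff.mp hf').1 _ (Finset.mem_sdiff.mp hg').1 hne _ hvf hvg
      · obtain ⟨j, hj, hgj⟩ := hCmem g (Finset.mem_inter.mp hg').2
        rcases (hmem_iff v j).mp (hgj ▸ hvg) with h | h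
        · exact hMside f hf' j hj (h ▸ hvf)
        · exact hMside f hf' _ (hsucclt j) (h ▸ hvf)
      · obtain ⟨j, hj, hfj⟩ := hCmem f (Finset.mem_inter.mp hf').2
        rcases (hmem_iff v j).mp (hfj ▸ hvf) with h | h
        · exact hMside g hg' j hj (h ▸ hvg)
        · exact hMside g hg' _ (hsucclt j) (h ▸ hvg)
      · exact hM'.2 _ (Finset.mem_inter.mp hf').1 _ (Finset.mem_inter.mp hg').1 hne _ hvf hvg
  -- N covers exactly the same vertices as M
  have hset : ∀ v : V, (∃ f ∈ N, v ∈ f) ↔ (∃ f ∈ M, v ∈ f) := by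
    intro v
    constructor
    · rintro ⟨f, hf, hvf⟩
      rcases Finset.mem_union.mp hf with h | h
      · exact ⟨f, (Finset.mem_sdiff.mp h).1, hvf⟩
      · obtain ⟨j, hj, hfj⟩ := hCmem f (Finset.mem_inter.mp h).2
        rcases (hmem_iff v j).mp (hfj ▸ hvf) with h' | h'
        · obtain ⟨⟨p, hpk, hpM, hcp⟩, _⟩ := hcov j hj
          exact ⟨e p, hpM, h' ▸ hcp⟩
        · obtain ⟨⟨p, hpk, hpM, hcp⟩, _⟩ := hcov _ (hsucclt j)
          exact ⟨e p, hpM, h' ▸ hcp⟩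
    · rintro ⟨f, hf, hvf⟩
      by_cases hfC : f ∈ C
      · obtain ⟨j, hj, hfj⟩ := hCmem f hfC
        rcases (hmem_iff v j).mp (hfj ▸ hvf) with h' | h'
        · obtain ⟨_, ⟨p, hpk, hpM', hcp⟩⟩ := hcov j hj
          exact ⟨e p, Finset.mem_union_right _
            (Finset.mem_inter.mpr ⟨hpM', hmemC p hpk⟩), h' ▸ hcp⟩
        · obtain ⟨_, ⟨p, hpk, hpM', hcp⟩⟩ := hcov _ (hsucclt j)
          exact ⟨e p, Finset.mem_union_right _
            (Finset.mem_inter.mpr ⟨hpM', hmemC p hpk⟩), h' ▸ hcp⟩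
      · exact ⟨f, Finset.mem_union_left _ (Finset.mem_sdiff.mpr ⟨hf, hfC⟩), hvf⟩
  have hw : nodeWeight W N = nodeWeight W M := by
    unfold nodeWeight
    congr 1
    ext v
    simp only [Finset.mem_filter, Finset.mem_univ, true_and]
    exact hset v
  -- but N differs from M: some cycle edge of M' lies in N but not in M
  have hexj : ∃ j, j < k ∧ e j ∈ M' ∧ e j ∉ M := by
    rcases hone 0 hk0 with ⟨h1, _⟩ | ⟨h1, h2⟩
    · have h2 := halt 0 hk0 h1
      have h1k : (0 + 1) % k = 1 := Nat.mod_eq_of_lt (by omega)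
      rw [h1k] at h2
      refine ⟨1, by omega, h2, ?_⟩
      rcases hone 1 (by omega) with ⟨_, hb⟩ | ⟨_, hb⟩
      · exact (hb h2).elim
      · exact hb
    · exact ⟨0, hk0, h1, h2⟩
  obtain ⟨j, hj, hjM', hjM⟩ := hexj
  have hNM := hMuniq N hNmatch hw
  have hmemN : e j ∈ N :=
    Finset.mem_union_right _ (Finset.mem_inter.mpr ⟨hjM', hmemC j hj⟩)
  rw [hNM] at hmemN
  exact hjM hmemN
end

section
/- Structure of maximal alternating paths under a B-weak-improvement: let G = (B, S, E) be a finite bipartite graph with node weight functions W and W' such that W is a B-weak-improvement of W'. Suppose M is the unique matching of G of maximum node-based weight with respect to W, and M' is the unique matching of G of maximum node-based weight with respect to W'. Then for every maximal alternating path A of M ∪ M' that is not a cycle: (1) it is not the case that both end edges of A belong to M' \ M; and (2) some endpoint of A is a vertex of B whose incident edge on A belongs to M. -/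
/-- A matching of the bipartite graph with vertex sides `B`, `S` and edge relation `E`:
a finite set of edges (pairs) that are pairwise vertex-disjoint. -/
def IsBipMatching {B S : Type*} (E : B → S → Prop) (M : Finset (B × S)) : Prop :=
  (∀ p ∈ M, E p.1 p.2) ∧
  (∀ p ∈ M, ∀ q ∈ M, p.1 = q.1 → p = q) ∧
  (∀ p ∈ M, ∀ q ∈ M, p.2 = q.2 → p = q)

/-- The node-based weight of a matching for a node weight function `W` on `B ⊕ S`:
`∑_{(i,j) ∈ M} (W i + W j)`, i.e. the sum of `W` over all covered vertices. -/
noncomputable def bipNodeWeight {B S : Type*} (W : B ⊕ S → ℝ) (M : Finset (B × S)) : ℝ :=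
  ∑ p ∈ M, (W (Sum.inl p.1) + W (Sum.inr p.2))

/-- There is an edge of the edge set `M` between the vertices `u` and `v` of `B ⊕ S`. -/
def EdgeBetween {B S : Type*} (M : Finset (B × S)) (u v : B ⊕ S) : Prop :=
  ∃ p ∈ M, (u = Sum.inl p.1 ∧ v = Sum.inr p.2) ∨ (v = Sum.inl p.1 ∧ u = Sum.inr p.2)

/-- **Structure of maximal alternating paths under a `B`-weak-improvement.**
Let `W, W'` be node weight functions on the bipartite graph `(B, S, E)` with `W` a
`B`-weak-improvement of `W'` (`W ≥ W'` on `B`, `W = W'` on `S`). Suppose `M` is the unique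
matching of maximum node-based weight w.r.t. `W` and `M'` is the unique matching of maximum
node-based weight w.r.t. `W'`. Then for every maximal alternating path
`c 0, c 1, ..., c k` of `M ∪ M'` that is not a cycle (distinct vertices, consecutive edges in
`M ∪ M'`, not extendable at either endpoint): (1) it is not the case that both end edges
belong to `M' \ M`; and (2) some endpoint is a vertex of `B` whose incident path edge
belongs to `M`. -/
theorem alternating_path_structure
    {B S : Type*} [Fintype B] [Fintype S] [DecidableEq B] [DecidableEq S]
    (E : B → S → Prop) (W W' : B ⊕ S → ℝ)
    (hWimp : ∀ i : B, W' (Sum.inl i) ≤ W (Sum.inl i))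
    (hWeq : ∀ j : S, W (Sum.inr j) = W' (Sum.inr j))
    (M M' : Finset (B × S))
    (hM : IsBipMatching E M) (hM' : IsBipMatching E M')
    (hMmax : ∀ N, IsBipMatching E N → bipNodeWeight W N ≤ bipNodeWeight W M)
    (hMuniq : ∀ N, IsBipMatching E N → bipNodeWeight W N = bipNodeWeight W M → N = M)
    (hM'max : ∀ N, IsBipMatching E N → bipNodeWeight W' N ≤ bipNodeWeight W' M')
    (hM'uniq : ∀ N, IsBipMatching E N → bipNodeWeight W' N = bipNodeWeight W' M' → N = M')
    (k : ℕ) (hk : 1 ≤ k) (c : ℕ → B ⊕ S)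
    (hinj : ∀ l l', l ≤ k → l' ≤ k → c l = c l' → l = l')
    (hpath : ∀ l < k, EdgeBetween (M ∪ M') (c l) (c (l + 1)))
    (hmax0 : ∀ v, EdgeBetween (M ∪ M') (c 0) v → v = c 1)
    (hmaxk : ∀ v, EdgeBetween (M ∪ M') (c k) v → v = c (k - 1)) :
    (¬ ((EdgeBetween M' (c 0) (c 1) ∧ ¬ EdgeBetween M (c 0) (c 1)) ∧
        (EdgeBetween M' (c (k - 1)) (c k) ∧ ¬ EdgeBetween M (c (k - 1)) (c k)))) ∧
    ((∃ i : B, c 0 = Sum.inl i ∧ EdgeBetween M (c 0) (c 1)) ∨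
      (∃ i : B, c k = Sum.inl i ∧ EdgeBetween M (c k) (c (k - 1)))) := by
  classical
  have hk0 : 0 < k := hk
  obtain ⟨hME, hM1, hM2⟩ := hM
  obtain ⟨hM'E, hM'1, hM'2⟩ := hM'
  have hpath' : ∀ l, l < k → ∃ p : B × S, p ∈ M ∪ M' ∧
      ((c l = Sum.inl p.1 ∧ c (l + 1) = Sum.inr p.2) ∨
       (c (l + 1) = Sum.inl p.1 ∧ c l = Sum.inr p.2)) := fun l hl => hpath l hl
  obtain ⟨e, hespec⟩ : ∃ e : ℕ → B × S, ∀ l, l < k →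
      e l ∈ M ∪ M' ∧
      ((c l = Sum.inl (e l).1 ∧ c (l + 1) = Sum.inr (e l).2) ∨
       (c (l + 1) = Sum.inl (e l).1 ∧ c l = Sum.inr (e l).2)) :=
    ⟨fun l => if h : l < k then (hpath' l h).choose else (hpath' 0 hk0).choose,
     fun l hl => by dsimp only; rw [dif_pos hl]; exact (hpath' l hl).choose_spec⟩
  have hemem : ∀ l, l < k → e l ∈ M ∪ M' := fun l hl => (hespec l hl).1
  have hbetw : ∀ l, l < k →
      ((c l = Sum.inl (e l).1 ∧ c (l + 1) = Sum.inr (e l).2) ∨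
       (c (l + 1) = Sum.inl (e l).1 ∧ c l = Sum.inr (e l).2)) := fun l hl => (hespec l hl).2
  -- uniqueness of an edge between two fixed vertices
  have huniq : ∀ (u v : B ⊕ S) (p q : B × S),
      ((u = Sum.inl p.1 ∧ v = Sum.inr p.2) ∨ (v = Sum.inl p.1 ∧ u = Sum.inr p.2)) →
      ((u = Sum.inl q.1 ∧ v = Sum.inr q.2) ∨ (v = Sum.inl q.1 ∧ u = Sum.inr q.2)) →
      p = q := by
    rintro u v p q (⟨h1, h2⟩ | ⟨h1, h2⟩) (⟨h3, h4⟩ | ⟨h3, h4⟩)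
    · exact Prod.ext (Sum.inl.inj (h1.symm.trans h3)) (Sum.inr.inj (h2.symm.trans h4))
    · exact absurd (h3.symm.trans h2) (by simp)
    · exact absurd (h1.symm.trans h4) (by simp)
    · exact Prod.ext (Sum.inl.inj (h1.symm.trans h3)) (Sum.inr.inj (h2.symm.trans h4))
  set P : Finset (B × S) := (M ∪ M').filter (fun p => ∃ l, l < k ∧
      ((c l = Sum.inl p.1 ∧ c (l + 1) = Sum.inr p.2) ∨
       (c (l + 1) = Sum.inl p.1 ∧ c l = Sum.inr p.2))) with hPdef
  have heP : ∀ l, l < k → e l ∈ P := fun l hl =>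
    Finset.mem_filter.mpr ⟨hemem l hl, l, hl, hbetw l hl⟩
  have hPchar : ∀ p ∈ P, ∃ l, l < k ∧ p = e l := by
    intro p hp
    obtain ⟨hpU, l, hl, hb⟩ := Finset.mem_filter.mp hp
    exact ⟨l, hl, huniq (c l) (c (l + 1)) p (e l) hb (hbetw l hl)⟩
  have heinj : ∀ l l', l < k → l' < k → e l = e l' → l = l' := by
    intro l l' hl hl' hee
    rcases hbetw l hl with ⟨h1, h2⟩ | ⟨h1, h2⟩ <;> rcases hbetw l' hl' with ⟨h3, h4⟩ | ⟨h3, h4⟩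
    · exact hinj l l' (by omega) (by omega) (by rw [h1, hee, ← h3])
    · have e1 : l = l' + 1 := hinj l (l' + 1) (by omega) (by omega) (by rw [h1, hee, ← h3])
      have e2 : l + 1 = l' := hinj (l + 1) l' (by omega) (by omega) (by rw [h2, hee, ← h4])
      omega
    · have e1 : l + 1 = l' := hinj (l + 1) l' (by omega) (by omega) (by rw [h1, hee, ← h3])
      have e2 : l = l' + 1 := hinj l (l' + 1) (by omega) (by omega) (by rw [h2, hee, ← h4])
      omega
    · exact hinj l l' (by omega) (by omega) (by rw [h2, hee, ← h4])
  -- key: an edge of X whose endpoint lies on the path must be a path edge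
  have key : ∀ X Y : Finset (B × S), X ∪ Y = M ∪ M' →
      (∀ p ∈ X, ∀ q ∈ X, p.1 = q.1 → p = q) → (∀ p ∈ X, ∀ q ∈ X, p.2 = q.2 → p = q) →
      (∀ p ∈ Y, ∀ q ∈ Y, p.1 = q.1 → p = q) → (∀ p ∈ Y, ∀ q ∈ Y, p.2 = q.2 → p = q) →
      ∀ p ∈ X, ∀ l, l ≤ k → (c l = Sum.inl p.1 ∨ c l = Sum.inr p.2) → p ∈ P := by
    intro X Y hXY hX1 hX2 hY1 hY2 p hp l hlk hvert
    have hpU : p ∈ M ∪ M' := by rw [← hXY]; exact Finset.mem_union_left _ hp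
    rcases Nat.eq_zero_or_pos l with rfl | hl0
    · rcases hvert with hv | hv
      · have h1 : Sum.inr p.2 = c 1 := hmax0 _ ⟨p, hpU, Or.inl ⟨hv, rfl⟩⟩
        exact Finset.mem_filter.mpr ⟨hpU, 0, hk0, Or.inl ⟨hv, h1.symm⟩⟩
      · have h1 : Sum.inl p.1 = c 1 := hmax0 _ ⟨p, hpU, Or.inr ⟨rfl, hv⟩⟩
        exact Finset.mem_filter.mpr ⟨hpU, 0, hk0, Or.inr ⟨h1.symm, hv⟩⟩
    rcases eq_or_lt_of_le hlk with rfl | hlk'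
    · have hk1 : l - 1 + 1 = l := by omega
      rcases hvert with hv | hv
      · have h1 : Sum.inr p.2 = c (l - 1) := hmaxk _ ⟨p, hpU, Or.inl ⟨hv, rfl⟩⟩
        refine Finset.mem_filter.mpr ⟨hpU, l - 1, by omega, Or.inr ⟨?_, h1.symm⟩⟩
        rw [hk1]; exact hv
      · have h1 : Sum.inl p.1 = c (l - 1) := hmaxk _ ⟨p, hpU, Or.inr ⟨rfl, hv⟩⟩
        refine Finset.mem_filter.mpr ⟨hpU, l - 1, by omega, Or.inl ⟨h1.symm, ?_⟩⟩
        rw [hk1]; exact hv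
    · -- interior vertex
      have hll : l - 1 + 1 = l := by omega
      have hb1 := hbetw (l - 1) (by omega)
      have hb2 := hbetw l (by omega)
      rw [hll] at hb1
      rcases hvert with hv | hv
      · -- c l = inl p.1
        rcases hb1 with ⟨h1, h2⟩ | ⟨h1, h2⟩
        · exact absurd (h2.symm.trans hv) (by simp)
        rcases hb2 with ⟨h3, h4⟩ | ⟨h3, h4⟩
        swap
        · exact absurd (h4.symm.trans hv) (by simp)
        have hc1 : (e (l - 1)).1 = p.1 := Sum.inl.inj (h1.symm.trans hv)
        have hc2 : (e l).1 = p.1 := Sum.inl.inj (h3.symm.trans hv)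
        have hne : e (l - 1) ≠ e l := by
          intro hEq
          have : c (l - 1) = c (l + 1) := by rw [h2, h4, hEq]
          have := hinj (l - 1) (l + 1) (by omega) (by omega) this
          omega
        have hu1 : e (l - 1) ∈ X ∪ Y := by rw [hXY]; exact hemem (l - 1) (by omega)
        have hu2 : e l ∈ X ∪ Y := by rw [hXY]; exact hemem l (by omega)
        rcases Finset.mem_union.mp hu1 with hx1 | hy1
        · have hpe : p = e (l - 1) := hX1 p hp _ hx1 hc1.symm
          rw [hpe]; exact heP _ (by omega)
        rcases Finset.mem_union.mp hu2 with hx2 | hy2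
        · have hpe : p = e l := hX1 p hp _ hx2 hc2.symm
          rw [hpe]; exact heP _ (by omega)
        · exact absurd (hY1 _ hy1 _ hy2 (hc1.trans hc2.symm)) hne
      · -- c l = inr p.2
        rcases hb1 with ⟨h1, h2⟩ | ⟨h1, h2⟩
        swap
        · exact absurd (h1.symm.trans hv) (by simp)
        rcases hb2 with ⟨h3, h4⟩ | ⟨h3, h4⟩
        · exact absurd (h3.symm.trans hv) (by simp)
        have hc1 : (e (l - 1)).2 = p.2 := Sum.inr.inj (h2.symm.trans hv)
        have hc2 : (e l).2 = p.2 := Sum.inr.inj (h4.symm.trans hv)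
        have hne : e (l - 1) ≠ e l := by
          intro hEq
          have : c (l - 1) = c (l + 1) := by rw [h1, h3, hEq]
          have := hinj (l - 1) (l + 1) (by omega) (by omega) this
          omega
        have hu1 : e (l - 1) ∈ X ∪ Y := by rw [hXY]; exact hemem (l - 1) (by omega)
        have hu2 : e l ∈ X ∪ Y := by rw [hXY]; exact hemem l (by omega)
        rcases Finset.mem_union.mp hu1 with hx1 | hy1
        · have hpe : p = e (l - 1) := hX2 p hp _ hx1 hc1.symm
          rw [hpe]; exact heP _ (by omega)
        rcases Finset.mem_union.mp hu2 with hx2 | hy2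
        · have hpe : p = e l := hX2 p hp _ hx2 hc2.symm
          rw [hpe]; exact heP _ (by omega)
        · exact absurd (hY2 _ hy1 _ hy2 (hc1.trans hc2.symm)) hne
  -- swapped matchings are matchings
  have hNmat : ∀ X Y : Finset (B × S), X ∪ Y = M ∪ M' →
      IsBipMatching E X → IsBipMatching E Y → IsBipMatching E ((X \ P) ∪ (Y ∩ P)) := by
    intro X Y hXY hX hY
    obtain ⟨hXE, hX1, hX2⟩ := hX
    obtain ⟨hYE, hY1, hY2⟩ := hY
    have hkX := key X Y hXY hX1 hX2 hY1 hY2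
    have hPvert : ∀ q ∈ P, ∃ l₁, l₁ ≤ k ∧ ∃ l₂, l₂ ≤ k ∧
        c l₁ = Sum.inl q.1 ∧ c l₂ = Sum.inr q.2 := by
      intro q hq
      obtain ⟨hqU, l, hl, hb⟩ := Finset.mem_filter.mp hq
      rcases hb with ⟨h1, h2⟩ | ⟨h1, h2⟩
      · exact ⟨l, by omega, l + 1, by omega, h1, h2⟩
      · exact ⟨l + 1, by omega, l, by omega, h1, h2⟩
    refine ⟨?_, ?_, ?_⟩
    · intro p hp
      rcases Finset.mem_union.mp hp with h | h
      · exact hXE _ (Finset.mem_sdiff.mp h).1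
      · exact hYE _ (Finset.mem_inter.mp h).1
    · intro p hp q hq hpq
      rcases Finset.mem_union.mp hp with h | h <;> rcases Finset.mem_union.mp hq with h' | h'
      · exact hX1 _ (Finset.mem_sdiff.mp h).1 _ (Finset.mem_sdiff.mp h').1 hpq
      · obtain ⟨hpX, hpP⟩ := Finset.mem_sdiff.mp h
        obtain ⟨hqY, hqP⟩ := Finset.mem_inter.mp h'
        obtain ⟨l₁, hl₁, l₂, hl₂, hv1, hv2⟩ := hPvert q hqP
        exact absurd (hkX p hpX l₁ hl₁ (Or.inl (by rw [hv1, hpq]))) hpP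
      · obtain ⟨hqX, hqP⟩ := Finset.mem_sdiff.mp h'
        obtain ⟨hpY, hpP⟩ := Finset.mem_inter.mp h
        obtain ⟨l₁, hl₁, l₂, hl₂, hv1, hv2⟩ := hPvert p hpP
        exact absurd (hkX q hqX l₁ hl₁ (Or.inl (by rw [hv1, ← hpq]))) hqP
      · exact hY1 _ (Finset.mem_inter.mp h).1 _ (Finset.mem_inter.mp h').1 hpq
    · intro p hp q hq hpq
      rcases Finset.mem_union.mp hp with h | h <;> rcases Finset.mem_union.mp hq with h' | h'
      · exact hX2 _ (Finset.mem_sdiff.mp h).1 _ (Finset.mem_sdiff.mp h').1 hpq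
      · obtain ⟨hpX, hpP⟩ := Finset.mem_sdiff.mp h
        obtain ⟨hqY, hqP⟩ := Finset.mem_inter.mp h'
        obtain ⟨l₁, hl₁, l₂, hl₂, hv1, hv2⟩ := hPvert q hqP
        exact absurd (hkX p hpX l₂ hl₂ (Or.inr (by rw [hv2, hpq]))) hpP
      · obtain ⟨hqX, hqP⟩ := Finset.mem_sdiff.mp h'
        obtain ⟨hpY, hpP⟩ := Finset.mem_inter.mp h
        obtain ⟨l₁, hl₁, l₂, hl₂, hv1, hv2⟩ := hPvert p hpP
        exact absurd (hkX q hqX l₂ hl₂ (Or.inr (by rw [hv2, ← hpq]))) hqP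
      · exact hY2 _ (Finset.mem_inter.mp h).1 _ (Finset.mem_inter.mp h').1 hpq
  have hNm : IsBipMatching E ((M \ P) ∪ (M' ∩ P)) :=
    hNmat M M' rfl ⟨hME, hM1, hM2⟩ ⟨hM'E, hM'1, hM'2⟩
  have hN'm : IsBipMatching E ((M' \ P) ∪ (M ∩ P)) :=
    hNmat M' M (Finset.union_comm M' M) ⟨hM'E, hM'1, hM'2⟩ ⟨hME, hM1, hM2⟩
  -- sum over X ∩ P as a sum along the path
  have himg : ∀ X : Finset (B × S),
      X ∩ P = ((Finset.range k).filter (fun l => e l ∈ X)).image e := by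
    intro X
    ext p
    simp only [Finset.mem_inter, Finset.mem_image, Finset.mem_filter, Finset.mem_range]
    constructor
    · rintro ⟨hpX, hpP⟩
      obtain ⟨l, hl, rfl⟩ := hPchar p hpP
      exact ⟨l, ⟨hl, hpX⟩, rfl⟩
    · rintro ⟨l, ⟨hl, hX⟩, rfl⟩
      exact ⟨hX, heP l hl⟩
  have hsum : ∀ (V : B ⊕ S → ℝ) (X : Finset (B × S)),
      ∑ p ∈ X ∩ P, (V (Sum.inl p.1) + V (Sum.inr p.2)) =
      ∑ l ∈ Finset.range k, (if e l ∈ X then V (c l) + V (c (l + 1)) else 0) := by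
    intro V X
    rw [himg X, Finset.sum_image (fun l hl l' hl' hee =>
      heinj l l' (Finset.mem_range.mp (Finset.mem_filter.mp hl).1)
        (Finset.mem_range.mp (Finset.mem_filter.mp hl').1) hee),
      Finset.sum_filter]
    refine Finset.sum_congr rfl fun l hl => ?_
    have hlk := Finset.mem_range.mp hl
    by_cases hX : e l ∈ X
    · rw [if_pos hX, if_pos hX]
      rcases hbetw l hlk with ⟨h1, h2⟩ | ⟨h1, h2⟩
      · rw [h1, h2]
      · rw [h1, h2]; ring
    · rw [if_neg hX, if_neg hX]
  set g : ℕ → ℝ := fun l =>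
    (if e l ∈ M' then (1 : ℝ) else 0) - (if e l ∈ M then (1 : ℝ) else 0) with hgdef
  -- consecutive path edges are not both in M, nor both in M'
  have hadj : ∀ l, l + 1 < k →
      ¬(e l ∈ M ∧ e (l + 1) ∈ M) ∧ ¬(e l ∈ M' ∧ e (l + 1) ∈ M') := by
    intro l hl1
    have hb1 := hbetw l (by omega)
    have hb2 := hbetw (l + 1) (by omega)
    have hne : e l ≠ e (l + 1) := by
      intro hEq
      rcases hb1 with ⟨h1, h2⟩ | ⟨h1, h2⟩ <;> rcases hb2 with ⟨h3, h4⟩ | ⟨h3, h4⟩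
      · exact absurd (h2.symm.trans (hEq ▸ h3)) (by simp)
      · have : c l = c (l + 1 + 1) := by rw [h1, h3, hEq]
        have := hinj l (l + 1 + 1) (by omega) (by omega) this
        omega
      · have : c l = c (l + 1 + 1) := by rw [h2, h4, hEq]
        have := hinj l (l + 1 + 1) (by omega) (by omega) this
        omega
      · exact absurd (h1.symm.trans (hEq ▸ h4)) (by simp)
    have hcoords : (e l).1 = (e (l + 1)).1 ∨ (e l).2 = (e (l + 1)).2 := by
      rcases hb1 with ⟨h1, h2⟩ | ⟨h1, h2⟩ <;> rcases hb2 with ⟨h3, h4⟩ | ⟨h3, h4⟩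
      · exact absurd (h2.symm.trans h3) (by simp)
      · exact Or.inr (Sum.inr.inj (h2.symm.trans h4))
      · exact Or.inl (Sum.inl.inj (h1.symm.trans h3))
      · exact absurd (h4.symm.trans h1) (by simp)
    constructor
    · rintro ⟨hm1, hm2⟩
      rcases hcoords with h | h
      · exact hne (hM1 _ hm1 _ hm2 h)
      · exact hne (hM2 _ hm1 _ hm2 h)
    · rintro ⟨hm1, hm2⟩
      rcases hcoords with h | h
      · exact hne (hM'1 _ hm1 _ hm2 h)
      · exact hne (hM'2 _ hm1 _ hm2 h)
  have hgalt : ∀ l, l + 1 < k → g (l + 1) = - g l := by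
    intro l hl1
    obtain ⟨hnm, hnm'⟩ := hadj l hl1
    by_cases hM0 : e l ∈ M
    · by_cases hM0' : e l ∈ M'
      · exact absurd (Finset.mem_union.mp (hemem (l + 1) (by omega)))
          (by rintro (h | h); exacts [hnm ⟨hM0, h⟩, hnm' ⟨hM0', h⟩])
      · have hN0 : e (l + 1) ∉ M := fun h => hnm ⟨hM0, h⟩
        have hN0' : e (l + 1) ∈ M' :=
          (Finset.mem_union.mp (hemem (l + 1) (by omega))).resolve_left hN0
        simp [hgdef, hM0, hM0', hN0, hN0']
    · have hM0' : e l ∈ M' := (Finset.mem_union.mp (hemem l (by omega))).resolve_left hM0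
      have hN0' : e (l + 1) ∉ M' := fun h => hnm' ⟨hM0', h⟩
      have hN0 : e (l + 1) ∈ M :=
        (Finset.mem_union.mp (hemem (l + 1) (by omega))).resolve_right hN0'
      simp [hgdef, hM0, hM0', hN0, hN0']
  have hgpow : ∀ l, l < k → g l = g 0 * (-1 : ℝ) ^ l := by
    intro l
    induction l with
    | zero => intro _; simp
    | succ n ih =>
        intro hl
        rw [hgalt n (by omega), ih (by omega), pow_succ]
        ring
  have htel : ∀ V : B ⊕ S → ℝ,
      ∑ l ∈ Finset.range k, (g l * (V (c l) + V (c (l + 1)))) =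
      g 0 * (V (c 0) - (-1 : ℝ) ^ k * V (c k)) := by
    intro V
    have h1 : ∀ l ∈ Finset.range k, g l * (V (c l) + V (c (l + 1))) =
        (fun i => g 0 * ((-1 : ℝ) ^ i * V (c i))) l -
        (fun i => g 0 * ((-1 : ℝ) ^ i * V (c i))) (l + 1) := by
      intro l hl
      rw [hgpow l (Finset.mem_range.mp hl)]
      simp only [pow_succ]
      ring
    rw [Finset.sum_congr rfl h1, Finset.sum_range_sub']
    simp only [pow_zero, one_mul]
    ring
  have hdiff : ∀ V : B ⊕ S → ℝ,
      (∑ p ∈ M' ∩ P, (V (Sum.inl p.1) + V (Sum.inr p.2))) -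
      (∑ p ∈ M ∩ P, (V (Sum.inl p.1) + V (Sum.inr p.2))) =
      g 0 * (V (c 0) - (-1 : ℝ) ^ k * V (c k)) := by
    intro V
    rw [hsum V M', hsum V M, ← Finset.sum_sub_distrib, ← htel V]
    refine Finset.sum_congr rfl fun l hl => ?_
    by_cases h1 : e l ∈ M' <;> by_cases h2 : e l ∈ M <;> simp [hgdef, h1, h2] <;> ring
  have hNweight : ∀ (V : B ⊕ S → ℝ) (X Y : Finset (B × S)),
      bipNodeWeight V ((X \ P) ∪ (Y ∩ P)) =
      bipNodeWeight V X - (∑ p ∈ X ∩ P, (V (Sum.inl p.1) + V (Sum.inr p.2)))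
        + (∑ p ∈ Y ∩ P, (V (Sum.inl p.1) + V (Sum.inr p.2))) := by
    intro V X Y
    have hdisj : Disjoint (X \ P) (Y ∩ P) := by
      rw [Finset.disjoint_left]
      intro a ha hb
      exact (Finset.mem_sdiff.mp ha).2 (Finset.mem_inter.mp hb).2
    unfold bipNodeWeight
    rw [Finset.sum_union hdisj,
      ← Finset.sum_inter_add_sum_sdiff X P (fun p => V (Sum.inl p.1) + V (Sum.inr p.2))]
    ring
  have hWN : bipNodeWeight W ((M \ P) ∪ (M' ∩ P)) =
      bipNodeWeight W M + g 0 * (W (c 0) - (-1 : ℝ) ^ k * W (c k)) := by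
    rw [hNweight W M M']
    have := hdiff W
    linarith
  have hW'N' : bipNodeWeight W' ((M' \ P) ∪ (M ∩ P)) =
      bipNodeWeight W' M' - g 0 * (W' (c 0) - (-1 : ℝ) ^ k * W' (c k)) := by
    rw [hNweight W' M' M]
    have := hdiff W'
    linarith
  have hineq1 : g 0 * (W (c 0) - (-1 : ℝ) ^ k * W (c k)) ≤ 0 := by
    have h := hMmax _ hNm
    rw [hWN] at h; linarith
  have hineq2 : 0 ≤ g 0 * (W' (c 0) - (-1 : ℝ) ^ k * W' (c k)) := by
    have h := hM'max _ hN'm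
    rw [hW'N'] at h; linarith
  have hNeqM : g 0 * (W (c 0) - (-1 : ℝ) ^ k * W (c k)) = 0 →
      (M \ P) ∪ (M' ∩ P) = M := by
    intro h0
    apply hMuniq _ hNm
    rw [hWN, h0, add_zero]
  have hN'eqM' : g 0 * (W' (c 0) - (-1 : ℝ) ^ k * W' (c k)) = 0 →
      (M' \ P) ∪ (M ∩ P) = M' := by
    intro h0
    apply hM'uniq _ hN'm
    rw [hW'N', h0, sub_zero]
  have hk1 : k - 1 + 1 = k := by omega
  have hgk : g (k - 1) = -(g 0 * (-1 : ℝ) ^ k) := by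
    rw [hgpow (k - 1) (by omega)]
    have hpw : (-1 : ℝ) ^ k = -(-1 : ℝ) ^ (k - 1) := by
      conv_lhs => rw [← hk1]
      rw [pow_succ]; ring
    rw [hpw]; ring
  have hexp : ∀ V : B ⊕ S → ℝ,
      g 0 * (V (c 0) - (-1 : ℝ) ^ k * V (c k)) = g 0 * V (c 0) + g (k - 1) * V (c k) := by
    intro V; rw [hgk]; ring
  have hEB : ∀ (X : Finset (B × S)) l, l < k →
      (EdgeBetween X (c l) (c (l + 1)) ↔ e l ∈ X) := by
    intro X l hl
    constructor
    · rintro ⟨p, hpX, hb⟩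
      rwa [huniq (c l) (c (l + 1)) p (e l) hb (hbetw l hl)] at hpX
    · intro h
      exact ⟨e l, h, hbetw l hl⟩
  have hEBsymm : ∀ (X : Finset (B × S)) (u v : B ⊕ S),
      EdgeBetween X u v → EdgeBetween X v u := by
    rintro X u v ⟨p, hp, hb⟩
    exact ⟨p, hp, hb.symm⟩
  have hWW' : ∀ u : B ⊕ S, W' u ≤ W u := by
    intro u
    cases u with
    | inl i => exact hWimp i
    | inr j => exact (hWeq j).ge
  have hEBk : ∀ X : Finset (B × S), (EdgeBetween X (c (k - 1)) (c k) ↔ e (k - 1) ∈ X) := by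
    intro X
    have h := hEB X (k - 1) (by omega)
    rwa [hk1] at h
  constructor
  · -- part (1)
    rintro ⟨⟨hb0', hb0⟩, hbk', hbk⟩
    have he0' : e 0 ∈ M' := (hEB M' 0 hk0).mp hb0'
    have he0 : e 0 ∉ M := fun h => hb0 ((hEB M 0 hk0).mpr h)
    have hek' : e (k - 1) ∈ M' := (hEBk M').mp hbk'
    have hek : e (k - 1) ∉ M := fun h => hbk ((hEBk M).mpr h)
    have hA1 : g 0 = 1 := by simp [hgdef, he0', he0]
    have hAk1 : g (k - 1) = 1 := by simp [hgdef, hek', hek]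
    have h1 : W (c 0) + W (c k) ≤ 0 := by
      have h := hineq1; rw [hexp W, hA1, hAk1] at h; linarith
    have h2 : 0 ≤ W' (c 0) + W' (c k) := by
      have h := hineq2; rw [hexp W', hA1, hAk1] at h; linarith
    have h3 : W' (c 0) ≤ W (c 0) := hWW' _
    have h4 : W' (c k) ≤ W (c k) := hWW' _
    have h0 : g 0 * (W (c 0) - (-1 : ℝ) ^ k * W (c k)) = 0 := by
      rw [hexp W, hA1, hAk1]; linarith
    have hNM := hNeqM h0
    have : e 0 ∈ M := by
      rw [← hNM]
      exact Finset.mem_union_right _ (Finset.mem_inter.mpr ⟨he0', heP 0 hk0⟩)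
    exact he0 this
  · -- part (2)
    by_contra hcon
    push_neg at hcon
    obtain ⟨hend0, hendk⟩ := hcon
    have hp0 : g 0 * W' (c 0) ≤ g 0 * W (c 0) := by
      by_cases h : e 0 ∈ M
      · have hEBM : EdgeBetween M (c 0) (c 1) := (hEB M 0 hk0).mpr h
        have hnotl : ∀ i : B, c 0 ≠ Sum.inl i := fun i hi => hend0 i hi hEBM
        obtain ⟨j, hj⟩ : ∃ j : S, c 0 = Sum.inr j := by
          cases hc : c 0 with
          | inl i => exact absurd hc (hnotl i)
          | inr j => exact ⟨j, rfl⟩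
        rw [hj, hWeq j]
      · have h' : e 0 ∈ M' := (Finset.mem_union.mp (hemem 0 hk0)).resolve_left h
        have hg1 : g 0 = 1 := by simp [hgdef, h, h']
        rw [hg1, one_mul, one_mul]; exact hWW' _
    have hpk : g (k - 1) * W' (c k) ≤ g (k - 1) * W (c k) := by
      by_cases h : e (k - 1) ∈ M
      · have hEBM : EdgeBetween M (c (k - 1)) (c k) := (hEBk M).mpr h
        have hEBM2 : EdgeBetween M (c k) (c (k - 1)) := hEBsymm M _ _ hEBM
        have hnotl : ∀ i : B, c k ≠ Sum.inl i := fun i hi => hendk i hi hEBM2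
        obtain ⟨j, hj⟩ : ∃ j : S, c k = Sum.inr j := by
          cases hc : c k with
          | inl i => exact absurd hc (hnotl i)
          | inr j => exact ⟨j, rfl⟩
        rw [hj, hWeq j]
      · have h' : e (k - 1) ∈ M' :=
          (Finset.mem_union.mp (hemem (k - 1) (by omega))).resolve_left h
        have hg1 : g (k - 1) = 1 := by simp [hgdef, h, h']
        rw [hg1, one_mul, one_mul]; exact hWW' _
    have h0W : g 0 * (W (c 0) - (-1 : ℝ) ^ k * W (c k)) = 0 := by
      have e1 := hineq1; have e2 := hineq2
      rw [hexp W] at e1 ⊢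
      rw [hexp W'] at e2
      linarith
    have h0W' : g 0 * (W' (c 0) - (-1 : ℝ) ^ k * W' (c k)) = 0 := by
      have e1 := hineq1; have e2 := hineq2
      rw [hexp W] at e1
      rw [hexp W'] at e2 ⊢
      linarith
    have hNM := hNeqM h0W
    have hN'M' := hN'eqM' h0W'
    have hmemMM' : ∀ l, l < k → e l ∈ M ∧ e l ∈ M' := by
      intro l hl
      have hPl := heP l hl
      have h1 : e l ∈ M := by
        rcases Finset.mem_union.mp (hemem l hl) with h | h
        · exact h
        · rw [← hNM]
          exact Finset.mem_union_right _ (Finset.mem_inter.mpr ⟨h, hPl⟩)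
      refine ⟨h1, ?_⟩
      rw [← hN'M']
      exact Finset.mem_union_right _ (Finset.mem_inter.mpr ⟨h1, hPl⟩)
    rcases Nat.lt_or_ge 1 k with hk2 | hk2
    · exact (hadj 0 (by omega)).1 ⟨(hmemMM' 0 (by omega)).1, (hmemMM' 1 (by omega)).1⟩
    · have hkeq : k = 1 := by omega
      subst hkeq
      have h0M : e 0 ∈ M := (hmemMM' 0 (by omega)).1
      have hEB0 : EdgeBetween M (c 0) (c 1) := (hEB M 0 (by omega)).mpr h0M
      rcases hbetw 0 (by omega) with ⟨h1, h2⟩ | ⟨h1, h2⟩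
      · exact hend0 (e 0).1 h1 hEB0
      · refine hendk (e 0).1 h1 ?_
        have : (1 : ℕ) - 1 = 0 := rfl
        rw [this]
        exact hEBsymm M _ _ hEB0
end
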